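/- arXiv:1510.03401 — 5 statements merged into one kernel-verified Lean document; each statement's English description precedes it below -/
import Mathlib

section
/- Let a ≥ 2, j ≠ 0, s be integers and d a squarefree positive integer. Suppose i ≥ 1 and d divides j·a^i + s. Then, with B = gcd(d, j·a), one has gcd(d, s) = gcd(d, j·a^i) = B, and a^{i-1} lies in a uniquely determined residue class coprime to d/B modulo d/B; in particular gcd(a, d/B) = 1. -/
theorem stmt_11 (a : ℤ) (ha : 2 ≤ a) (j : ℤ) (hj : j ≠ 0) (s : ℤ)
    (d : ℕ) (hd : 0 < d) (hsf : Squarefree d) (i : ℕ) (hi : 1 ≤ i)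
    (hdvd : (d : ℤ) ∣ j * a ^ i + s) :
    Int.gcd (d : ℤ) s = Int.gcd (d : ℤ) (j * a) ∧
    Int.gcd (d : ℤ) (j * a ^ i) = Int.gcd (d : ℤ) (j * a) ∧
    (∃! c : (ZMod (d / Int.gcd (d : ℤ) (j * a)))ˣ,
      ((a : ZMod (d / Int.gcd (d : ℤ) (j * a))) ^ (i - 1) = (c : ZMod (d / Int.gcd (d : ℤ) (j * a))))) ∧
    Int.gcd a ((d / Int.gcd (d : ℤ) (j * a) : ℕ) : ℤ) = 1 := by
  set B := Int.gcd (d : ℤ) (j * a) with hB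
  have hai : (j * a : ℤ) ∣ j * a ^ i :=
    mul_dvd_mul_left j (dvd_pow_self a (by omega))
  -- gcd d (j a^i) = B
  have h1 : Int.gcd (d : ℤ) (j * a ^ i) = B := by
    apply Nat.dvd_antisymm
    · set g := Int.gcd (d : ℤ) (j * a ^ i) with hg
      have hgd : (g : ℤ) ∣ (d : ℤ) := Int.gcd_dvd_left _ _
      have hgd' : g ∣ d := by exact_mod_cast hgd
      have hgsq : Squarefree (g : ℤ) := Int.squarefree_natCast.mpr (hsf.squarefree_of_dvd hgd')
      have hpow : (g : ℤ) ∣ (j * a) ^ i := by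
        refine dvd_trans (Int.gcd_dvd_right _ _) ?_
        rw [mul_pow]
        exact mul_dvd_mul (dvd_pow_self j (by omega)) dvd_rfl
      have hja : (g : ℤ) ∣ j * a := (hgsq.dvd_pow_iff_dvd (by omega)).mp hpow
      have := Int.dvd_gcd hgd hja
      exact_mod_cast this
    · have := Int.dvd_gcd (Int.gcd_dvd_left (a := (d : ℤ)) (b := j * a))
        (dvd_trans (Int.gcd_dvd_right _ _) hai)
      exact_mod_cast this
  -- gcd d s = gcd d (j a^i)
  have h0 : Int.gcd (d : ℤ) s = B := by
    rw [← h1]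
    apply Nat.dvd_antisymm
    · have hgd : ((Int.gcd (d : ℤ) s : ℕ) : ℤ) ∣ (d : ℤ) := Int.gcd_dvd_left _ _
      have hx : ((Int.gcd (d : ℤ) s : ℕ) : ℤ) ∣ j * a ^ i := by
        have h2 : ((Int.gcd (d : ℤ) s : ℕ) : ℤ) ∣ j * a ^ i + s :=
          dvd_trans hgd hdvd
        have := dvd_sub h2 (Int.gcd_dvd_right (a := (d : ℤ)) (b := s))
        simpa using this
      have := Int.dvd_gcd hgd hx
      exact_mod_cast this
    · have hgd : ((Int.gcd (d : ℤ) (j * a ^ i) : ℕ) : ℤ) ∣ (d : ℤ) := Int.gcd_dvd_left _ _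
      have hx : ((Int.gcd (d : ℤ) (j * a ^ i) : ℕ) : ℤ) ∣ s := by
        have h2 : ((Int.gcd (d : ℤ) (j * a ^ i) : ℕ) : ℤ) ∣ j * a ^ i + s :=
          dvd_trans hgd hdvd
        have := dvd_sub h2 (Int.gcd_dvd_right (a := (d : ℤ)) (b := j * a ^ i))
        simpa using this
      have := Int.dvd_gcd hgd hx
      exact_mod_cast this
  -- coprimality of a with d / B
  have hBd : B ∣ d := by exact_mod_cast Int.gcd_dvd_left (a := (d : ℤ)) (b := j * a)
  have hdeq : B * (d / B) = d := Nat.mul_div_cancel' hBd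
  have hcop : Nat.Coprime B (d / B) := by
    apply Nat.coprime_of_squarefree_mul
    rw [hdeq]; exact hsf
  have hcopa : Int.gcd a ((d / B : ℕ) : ℤ) = 1 := by
    set g := Int.gcd a ((d / B : ℕ) : ℤ) with hg
    have hga : (g : ℤ) ∣ a := Int.gcd_dvd_left _ _
    have hgn : (g : ℤ) ∣ ((d / B : ℕ) : ℤ) := Int.gcd_dvd_right _ _
    have hgn' : g ∣ d / B := by exact_mod_cast hgn
    have hgd : (g : ℤ) ∣ (d : ℤ) := by
      have : g ∣ d := hgn'.trans (Nat.div_dvd_of_dvd hBd)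
      exact_mod_cast this
    have hgB : g ∣ B := by
      have := Int.dvd_gcd hgd (dvd_mul_of_dvd_right hga j)
      exact_mod_cast this
    exact Nat.eq_one_of_dvd_coprimes hcop hgB hgn'
  refine ⟨h0, h1, ?_, hcopa⟩
  -- the unit
  have hu : IsUnit (a : ZMod (d / B)) := by
    obtain ⟨u, v, huv⟩ := Int.isCoprime_iff_gcd_eq_one.mpr hcopa
    apply IsUnit.of_mul_eq_one (u : ZMod (d / B))
    have : ((u * a + v * ((d / B : ℕ) : ℤ) : ℤ) : ZMod (d / B)) = 1 := by
      rw [huv]; simp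
    simp only [Int.cast_add, Int.cast_mul, Int.cast_natCast, ZMod.natCast_self,
      mul_zero, add_zero] at this
    linear_combination this
  refine ⟨hu.unit ^ (i - 1), ?_, ?_⟩
  · simp only [Units.val_pow_eq_pow_val, hu.unit_spec]
  · intro c hc
    apply Units.ext
    rw [← hc, Units.val_pow_eq_pow_val, hu.unit_spec]
end

section
/- (Erdős's strengthening of Romanoff's theorem) For any integer A ≥ 2 and any integer S ≥ 1, the series ∑_{n ≥ 1, gcd(n, A) = 1} S^{ω(n)} / (n · ℓ_A(n)) converges, where ℓ_A(n) is the multiplicative order of A modulo n and ω(n) is the number of distinct prime factors of n. -/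
open Finset Real ArithmeticFunction

/-! Auxiliary lemmas for Erdős's strengthening of Romanoff's theorem. -/

section Aux

/-- Order facts: positivity and the key divisibility `n ∣ A ^ ℓ - 1`. -/
lemma romanoff_ord (A n : ℕ) (hA : 2 ≤ A) (hn : 0 < n) (h : Nat.Coprime n A) :
    1 ≤ orderOf (A : ZMod n) ∧ n ∣ A ^ orderOf (A : ZMod n) - 1
      ∧ orderOf (A : ZMod n) ≤ n := by
  have htot : A ^ n.totient ≡ 1 [MOD n] := Nat.ModEq.pow_totient h.symm
  have hcast : ((A : ZMod n)) ^ n.totient = 1 := by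
    have := (ZMod.natCast_eq_natCast_iff _ _ _).2 htot
    push_cast at this
    exact this
  have hfin : IsOfFinOrder (A : ZMod n) :=
    isOfFinOrder_iff_pow_eq_one.2 ⟨n.totient, Nat.totient_pos.2 hn, hcast⟩
  have hpos : 1 ≤ orderOf (A : ZMod n) := hfin.orderOf_pos
  have hle : orderOf (A : ZMod n) ≤ n := by
    have hdvd : orderOf (A : ZMod n) ∣ n.totient := orderOf_dvd_of_pow_eq_one hcast
    exact le_trans (Nat.le_of_dvd (Nat.totient_pos.2 hn) hdvd) (Nat.totient_le n)
  refine ⟨hpos, ?_, hle⟩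
  have hone : ((A ^ orderOf (A : ZMod n) : ℕ) : ZMod n) = ((1 : ℕ) : ZMod n) := by
    push_cast
    exact pow_orderOf_eq_one _
  have hmod : A ^ orderOf (A : ZMod n) ≡ 1 [MOD n] :=
    (ZMod.natCast_eq_natCast_iff _ _ _).1 hone
  exact (Nat.modEq_iff_dvd' (Nat.one_le_pow _ _ (by omega))).1 hmod.symm

/-- The lcm of `A^d - 1` for `1 ≤ d ≤ 2^j`. -/
def romanoffM (A j : ℕ) : ℕ := (Finset.Icc 1 (2 ^ j)).lcm (fun d => A ^ d - 1)

lemma romanoffM_pos (A j : ℕ) (hA : 2 ≤ A) : 0 < romanoffM A j := by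
  refine Nat.pos_of_ne_zero fun h0 => ?_
  rw [romanoffM, Finset.lcm_eq_zero_iff] at h0
  obtain ⟨d, hd, hd0⟩ := h0
  simp only [Finset.mem_coe, Finset.mem_Icc] at hd
  have h2 : 2 ≤ A ^ d := le_trans hA (Nat.le_self_pow (by omega) A)
  omega

lemma romanoffM_le (A j : ℕ) (hA : 2 ≤ A) : romanoffM A j ≤ A ^ 4 ^ j := by
  have hdvd : romanoffM A j ∣ ∏ d ∈ Finset.Icc 1 (2 ^ j), (A ^ d - 1) :=
    Finset.lcm_dvd fun d hd => Finset.dvd_prod_of_mem _ hd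
  have hppos : 0 < ∏ d ∈ Finset.Icc 1 (2 ^ j), (A ^ d - 1) := by
    apply Finset.prod_pos
    intro d hd
    simp only [Finset.mem_Icc] at hd
    have : 2 ≤ A ^ d := le_trans (by omega) (Nat.le_self_pow (by omega) A)
    omega
  refine le_trans (Nat.le_of_dvd hppos hdvd) ?_
  calc ∏ d ∈ Finset.Icc 1 (2 ^ j), (A ^ d - 1)
      ≤ ∏ d ∈ Finset.Icc 1 (2 ^ j), A ^ d := Finset.prod_le_prod' fun d _ => Nat.sub_le _ _
    _ = A ^ (∑ d ∈ Finset.Icc 1 (2 ^ j), d) := by rw [← Finset.prod_pow_eq_pow_sum]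
    _ ≤ A ^ (4 ^ j) := by
        apply Nat.pow_le_pow_right (by omega)
        calc ∑ d ∈ Finset.Icc 1 (2 ^ j), d ≤ ∑ _d ∈ Finset.Icc 1 (2 ^ j), 2 ^ j :=
              Finset.sum_le_sum fun d hd => (Finset.mem_Icc.1 hd).2
          _ = (2 ^ j) * (2 ^ j) := by
              rw [Finset.sum_const, Nat.card_Icc, smul_eq_mul]
              norm_num
          _ = 4 ^ j := by rw [← Nat.mul_pow]

lemma dvd_romanoffM (A n j : ℕ) (hA : 2 ≤ A) (hn : 0 < n) (h : Nat.Coprime n A)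
    (hord : orderOf (A : ZMod n) ≤ 2 ^ j) : n ∣ romanoffM A j := by
  obtain ⟨h1, h2, -⟩ := romanoff_ord A n hA hn h
  exact h2.trans (Finset.dvd_lcm (Finset.mem_Icc.2 ⟨h1, hord⟩))

end Aux

section DivisorSum

/-- The multiplicative weight `n ↦ S^ω(n)/n` as an arithmetic function. -/
noncomputable def romG (S : ℕ) : ArithmeticFunction ℝ :=
  ⟨fun n => (S : ℝ) ^ n.primeFactors.card / n, by simp⟩

lemma romG_apply (S n : ℕ) : romG S n = (S : ℝ) ^ n.primeFactors.card / n := rfl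

lemma romG_mult (S : ℕ) : (romG S).IsMultiplicative := by
  constructor
  · simp [romG_apply]
  · intro m n hmn
    rcases eq_or_ne m 0 with rfl | hm
    · have hn1 : n = 1 := by simpa using hmn
      simp [romG_apply, hn1]
    rcases eq_or_ne n 0 with rfl | hn
    · have hm1 : m = 1 := by simpa using hmn.symm
      simp [romG_apply, hm1]
    rw [romG_apply, romG_apply, romG_apply, hmn.primeFactors_mul,
      Finset.card_union_of_disjoint hmn.disjoint_primeFactors]
    push_cast
    rw [pow_add, div_mul_div_comm]

lemma romG_primePow_sum (S p k : ℕ) (hp : p.Prime) :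
    ∑ i ∈ Finset.range (k + 1), romG S (p ^ i) ≤ 1 + (S : ℝ) / ((p : ℝ) - 1) := by
  have hp1 : (1 : ℝ) < p := by exact_mod_cast hp.one_lt
  have hr0 : (0 : ℝ) ≤ 1 / p := by positivity
  have hr1 : (1 : ℝ) / p < 1 := by
    rw [div_lt_one (by linarith)]; linarith
  rw [Finset.sum_range_succ']
  have h0 : romG S (p ^ 0) = 1 := by simp [romG_apply]
  rw [h0]
  have hterm : ∀ i, romG S (p ^ (i + 1)) = (S : ℝ) * ((1 / (p : ℝ)) ^ i * (1 / (p : ℝ))) := by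
    intro i
    rw [romG_apply, Nat.primeFactors_prime_pow (Nat.succ_ne_zero i) hp]
    simp only [Finset.card_singleton, pow_one]
    rw [div_pow, one_pow, pow_succ]
    push_cast
    field_simp
  have hgeom : ∑ i ∈ Finset.range k, (1 / (p : ℝ)) ^ i ≤ (1 - 1 / (p : ℝ))⁻¹ := by
    refine le_trans (Summable.sum_le_tsum _ (fun i _ => by positivity)
      (summable_geometric_of_lt_one hr0 hr1)) ?_
    exact le_of_eq (tsum_geometric_of_lt_one hr0 hr1)
  have hS0 : (0 : ℝ) ≤ S := Nat.cast_nonneg S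
  calc (∑ i ∈ Finset.range k, romG S (p ^ (i + 1))) + 1
      = 1 + (S : ℝ) * (1 / (p : ℝ)) * ∑ i ∈ Finset.range k, (1 / (p : ℝ)) ^ i := by
        rw [Finset.mul_sum, add_comm]
        congr 1
        refine Finset.sum_congr rfl fun i _ => ?_
        rw [hterm]
        ring
    _ ≤ 1 + (S : ℝ) * (1 / (p : ℝ)) * (1 - 1 / (p : ℝ))⁻¹ := by
        have h2 : (0 : ℝ) ≤ (S : ℝ) * (1 / (p : ℝ)) := by positivity
        have h3 := mul_le_mul_of_nonneg_left hgeom h2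
        linarith
    _ = 1 + (S : ℝ) / ((p : ℝ) - 1) := by
        have hpne : (p : ℝ) ≠ 0 := by linarith
        have hpne1 : (p : ℝ) - 1 ≠ 0 := by intro h; nlinarith [h]
        field_simp

lemma romG_primePow_nonneg (S p k : ℕ) :
    (0 : ℝ) ≤ ∑ i ∈ Finset.range (k + 1), romG S (p ^ i) :=
  Finset.sum_nonneg fun i _ => by rw [romG_apply]; positivity

open scoped ArithmeticFunction.zeta in
/-- Bounding the divisor sum by `exp` of a sum over prime factors. -/
lemma romanoff_sumdiv (S m : ℕ) (hm : m ≠ 0) :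
    ∑ n ∈ m.divisors, (S : ℝ) ^ n.primeFactors.card / n ≤
      Real.exp (S * ∑ p ∈ m.primeFactors, 1 / ((p : ℝ) - 1)) := by
  have hF : ((ζ : ArithmeticFunction ℝ) * romG S).IsMultiplicative :=
    ArithmeticFunction.isMultiplicative_zeta.natCast.mul (romG_mult S)
  have h1 : ∑ n ∈ m.divisors, (S : ℝ) ^ n.primeFactors.card / n
      = ((ζ : ArithmeticFunction ℝ) * romG S) m := by
    rw [ArithmeticFunction.coe_zeta_mul_apply]
    rfl
  rw [h1, hF.multiplicative_factorization _ hm, Finsupp.prod]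
  rw [Nat.support_factorization]
  have hterm : ∀ p ∈ m.primeFactors,
      ((ζ : ArithmeticFunction ℝ) * romG S) (p ^ m.factorization p)
        ≤ Real.exp ((S : ℝ) * (1 / ((p : ℝ) - 1))) := by
    intro p hp
    have hpp : p.Prime := Nat.prime_of_mem_primeFactors hp
    rw [ArithmeticFunction.coe_zeta_mul_apply, Nat.sum_divisors_prime_pow hpp]
    refine le_trans (romG_primePow_sum S p _ hpp) ?_
    have h3 := Real.add_one_le_exp ((S : ℝ) * (1 / ((p : ℝ) - 1)))
    rw [mul_one_div] at h3 ⊢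
    linarith
  calc ∏ p ∈ m.primeFactors, ((ζ : ArithmeticFunction ℝ) * romG S) (p ^ m.factorization p)
      ≤ ∏ p ∈ m.primeFactors, Real.exp ((S : ℝ) * (1 / ((p : ℝ) - 1))) := by
        refine Finset.prod_le_prod (fun p hp => ?_) hterm
        have hpp : p.Prime := Nat.prime_of_mem_primeFactors hp
        rw [ArithmeticFunction.coe_zeta_mul_apply, Nat.sum_divisors_prime_pow hpp]
        exact romG_primePow_nonneg S p _
    _ = Real.exp (∑ p ∈ m.primeFactors, (S : ℝ) * (1 / ((p : ℝ) - 1))) :=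
        (Real.exp_sum _ _).symm
    _ = Real.exp (S * ∑ p ∈ m.primeFactors, 1 / ((p : ℝ) - 1)) := by
        rw [← Finset.mul_sum]

end DivisorSum

section Mertens

lemma romanoff_dyadic (i : ℕ) (hi : 1 ≤ i) (P : Finset ℕ)
    (hP : ∀ p ∈ P, p.Prime ∧ 2 ^ i < p ∧ p ≤ 2 ^ (i + 1)) :
    ∑ p ∈ P, 1 / ((p : ℝ) - 1) ≤ 4 / i := by
  have hsub : P ⊆ (Finset.range (2 ^ (i + 1) + 1)).filter Nat.Prime := by
    intro p hp
    obtain ⟨h1, h2, h3⟩ := hP p hp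
    simp only [Finset.mem_filter, Finset.mem_range]
    exact ⟨by omega, h1⟩
  have hprodle : ∏ p ∈ P, p ≤ primorial (2 ^ (i + 1)) := by
    refine Finset.prod_le_prod_of_subset_of_one_le' hsub fun q hq _ => ?_
    exact (Finset.mem_filter.1 hq).2.one_lt.le
  have hpow : (2 ^ i) ^ P.card ≤ ∏ p ∈ P, p :=
    Finset.pow_card_le_prod _ _ _ fun p hp => (hP p hp).2.1.le
  have hcard : i * P.card ≤ 2 ^ (i + 2) := by
    have h2 : (2 : ℕ) ^ (i * P.card) ≤ 2 ^ 2 ^ (i + 2) := by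
      rw [pow_mul]
      calc ((2 : ℕ) ^ i) ^ P.card ≤ ∏ p ∈ P, p := hpow
        _ ≤ primorial (2 ^ (i + 1)) := hprodle
        _ ≤ 4 ^ 2 ^ (i + 1) := primorial_le_4_pow _
        _ = 2 ^ 2 ^ (i + 2) := by
            rw [show (4 : ℕ) = 2 ^ 2 by norm_num, ← pow_mul, pow_succ 2 (i + 1)]
            ring_nf
    exact (Nat.pow_le_pow_iff_right (by norm_num)).1 h2
  have hterm : ∀ p ∈ P, 1 / ((p : ℝ) - 1) ≤ ((2 : ℝ) ^ i)⁻¹ := by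
    intro p hp
    obtain ⟨h1, h2, _⟩ := hP p hp
    have hnat : (2 : ℕ) ^ i ≤ p - 1 := by omega
    have hreal : (2 : ℝ) ^ i ≤ (p : ℝ) - 1 := by
      have h2p : 1 ≤ p := h1.one_lt.le
      calc (2 : ℝ) ^ i = ((2 ^ i : ℕ) : ℝ) := by push_cast; ring
        _ ≤ ((p - 1 : ℕ) : ℝ) := by exact_mod_cast hnat
        _ = (p : ℝ) - 1 := by push_cast [h2p]; ring
    rw [one_div]
    exact inv_anti₀ (by positivity) hreal
  have hipos : (0 : ℝ) < i := by exact_mod_cast hi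
  have hppos : (0 : ℝ) < 2 ^ i := by positivity
  calc ∑ p ∈ P, 1 / ((p : ℝ) - 1)
      ≤ P.card • ((2 : ℝ) ^ i)⁻¹ := Finset.sum_le_card_nsmul _ _ _ hterm
    _ = (P.card : ℝ) * ((2 : ℝ) ^ i)⁻¹ := by rw [nsmul_eq_mul]
    _ ≤ 4 / i := by
        rw [le_div_iff₀ hipos]
        have hc : (i : ℝ) * P.card ≤ 4 * 2 ^ i := by
          have : (i * P.card : ℕ) ≤ 2 ^ (i + 2) := hcard
          have h4 : ((2 ^ (i + 2) : ℕ) : ℝ) = 4 * 2 ^ i := by push_cast; ring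
          calc ((i : ℝ)) * P.card = ((i * P.card : ℕ) : ℝ) := by push_cast; ring
            _ ≤ ((2 ^ (i + 2) : ℕ) : ℝ) := by exact_mod_cast this
            _ = 4 * 2 ^ i := h4
        calc (P.card : ℝ) * ((2 : ℝ) ^ i)⁻¹ * i = ((i : ℝ) * P.card) * ((2 : ℝ) ^ i)⁻¹ := by
              ring
          _ ≤ (4 * 2 ^ i) * ((2 : ℝ) ^ i)⁻¹ :=
              mul_le_mul_of_nonneg_right hc (by positivity)
          _ = 4 := by field_simp

lemma romanoff_small (K : ℕ) (hK : 1 ≤ K) (Q : Finset ℕ)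
    (hQ : ∀ p ∈ Q, p.Prime ∧ p ≤ 2 ^ K) :
    ∑ p ∈ Q, 1 / ((p : ℝ) - 1) ≤ 5 + 4 * Real.log K := by
  have hmaps : ∀ p ∈ Q, Nat.log 2 (p - 1) ∈ Finset.range K := by
    intro p hp
    obtain ⟨hpp, hple⟩ := hQ p hp
    have h2 : 2 ≤ p := hpp.two_le
    simp only [Finset.mem_range]
    have hlt : p - 1 < 2 ^ K := by
      have : 1 ≤ 2 ^ K := Nat.one_le_two_pow
      omega
    exact Nat.log_lt_of_lt_pow (by omega) hlt
  rw [← Finset.sum_fiberwise_of_maps_to hmaps]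
  have hfiber : ∀ j ∈ Finset.range K,
      (∑ p ∈ Q.filter (fun p => Nat.log 2 (p - 1) = j), 1 / ((p : ℝ) - 1))
        ≤ (if j = 0 then (1 : ℝ) else 4 / (j : ℝ)) := by
    intro j _
    by_cases hj0 : j = 0
    · subst hj0
      simp only [if_pos rfl]
      have hsub : Q.filter (fun p => Nat.log 2 (p - 1) = 0) ⊆ {2} := by
        intro p hp
        obtain ⟨hpQ, hplog⟩ := Finset.mem_filter.1 hp
        obtain ⟨hpp, _⟩ := hQ p hpQ
        have h2 : 2 ≤ p := hpp.two_le
        have := Nat.log_eq_zero_iff.1 hplog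
        have : p ≤ 2 := by omega
        simp only [Finset.mem_singleton]
        omega
      calc (∑ p ∈ Q.filter (fun p => Nat.log 2 (p - 1) = 0), 1 / ((p : ℝ) - 1))
          ≤ ∑ p ∈ ({2} : Finset ℕ), 1 / ((p : ℝ) - 1) := by
            refine Finset.sum_le_sum_of_subset_of_nonneg hsub fun p hp _ => ?_
            simp only [Finset.mem_singleton] at hp
            subst hp
            norm_num
        _ = 1 := by norm_num
    · rw [if_neg hj0]
      refine romanoff_dyadic j (by omega) _ fun p hp => ?_
      obtain ⟨hpQ, hplog⟩ := Finset.mem_filter.1 hp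
      obtain ⟨hpp, _⟩ := hQ p hpQ
      have h2 : 2 ≤ p := hpp.two_le
      have hlow : 2 ^ j ≤ p - 1 := by
        rw [← hplog]
        exact Nat.pow_log_le_self 2 (by omega)
      have hhigh : p - 1 < 2 ^ (j + 1) := by
        rw [← hplog]
        exact Nat.lt_pow_succ_log_self (by norm_num) _
      exact ⟨hpp, by omega, by omega⟩
  calc (∑ j ∈ Finset.range K, ∑ p ∈ Q.filter (fun p => Nat.log 2 (p - 1) = j),
          1 / ((p : ℝ) - 1))
      ≤ ∑ j ∈ Finset.range K, (if j = 0 then (1 : ℝ) else 4 / (j : ℝ)) :=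
        Finset.sum_le_sum hfiber
    _ ≤ 5 + 4 * Real.log K := by
        obtain ⟨K', rfl⟩ : ∃ K', K = K' + 1 := ⟨K - 1, by omega⟩
        rw [Finset.sum_range_succ']
        have h0 : (if (0 : ℕ) = 0 then (1 : ℝ) else 4 / ((0 : ℕ) : ℝ)) = 1 := if_pos rfl
        rw [h0]
        have hterm2 : ∀ x ∈ Finset.range K',
            (if x + 1 = 0 then (1 : ℝ) else 4 / ((x + 1 : ℕ) : ℝ))
              = 4 * (((x : ℝ) + 1))⁻¹ := by
          intro x _
          rw [if_neg (Nat.succ_ne_zero x)]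
          push_cast
          rw [div_eq_mul_inv]
        rw [Finset.sum_congr rfl hterm2, ← Finset.mul_sum]
        have hharm : (harmonic K' : ℝ) = ∑ x ∈ Finset.range K', (((x : ℝ)) + 1)⁻¹ := by
          rw [harmonic]
          push_cast
          rfl
        rw [← hharm]
        have hlog : (harmonic K' : ℝ) ≤ 1 + Real.log K' := harmonic_le_one_add_log K'
        have hmono : Real.log K' ≤ Real.log ((K' : ℝ) + 1) := by
          rcases Nat.eq_zero_or_pos K' with h | h
          · subst h
            norm_num
          · apply Real.log_le_log (by exact_mod_cast h)
            linarith
        have hK1 : (0 : ℝ) ≤ Real.log ((K' : ℝ) + 1) := Real.log_nonneg (by push_cast; linarith)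
        push_cast
        linarith [hlog, hmono, hK1]

lemma romanoff_mert (m K : ℕ) (hm : m ≠ 0) (hK : 1 ≤ K) (hmK : m ≤ 2 ^ 2 ^ K) :
    ∑ p ∈ m.primeFactors, 1 / ((p : ℝ) - 1) ≤ 6 + 4 * Real.log K := by
  rw [← Finset.sum_filter_add_sum_filter_not m.primeFactors (fun p => p ≤ 2 ^ K)]
  have hsmall : ∑ p ∈ m.primeFactors.filter (fun p => p ≤ 2 ^ K), 1 / ((p : ℝ) - 1)
      ≤ 5 + 4 * Real.log K := by
    refine romanoff_small K hK _ fun p hp => ?_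
    obtain ⟨hpm, hple⟩ := Finset.mem_filter.1 hp
    exact ⟨Nat.prime_of_mem_primeFactors hpm, hple⟩
  have hlarge : ∑ p ∈ m.primeFactors.filter (fun p => ¬ p ≤ 2 ^ K), 1 / ((p : ℝ) - 1)
      ≤ 1 := by
    set L := m.primeFactors.filter (fun p => ¬ p ≤ 2 ^ K) with hL
    have hLsub : L ⊆ m.primeFactors := Finset.filter_subset _ _
    have hprod_dvd : ∏ p ∈ L, p ∣ m :=
      (Finset.prod_dvd_prod_of_subset L m.primeFactors _ hLsub).trans
        (Nat.prod_primeFactors_dvd m)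
    have hprod_le : ∏ p ∈ L, p ≤ 2 ^ 2 ^ K :=
      le_trans (Nat.le_of_dvd (Nat.pos_of_ne_zero hm) hprod_dvd) hmK
    have hpow : (2 ^ K) ^ L.card ≤ ∏ p ∈ L, p := by
      refine Finset.pow_card_le_prod _ _ _ fun p hp => ?_
      have := (Finset.mem_filter.1 hp).2
      omega
    have hcard : K * L.card ≤ 2 ^ K := by
      have h2 : (2 : ℕ) ^ (K * L.card) ≤ 2 ^ 2 ^ K := by
        rw [pow_mul]
        exact le_trans hpow hprod_le
      exact (Nat.pow_le_pow_iff_right (by norm_num)).1 h2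
    have hterm : ∀ p ∈ L, 1 / ((p : ℝ) - 1) ≤ ((2 : ℝ) ^ K)⁻¹ := by
      intro p hp
      have hgt := (Finset.mem_filter.1 hp).2
      have hpp : p.Prime := Nat.prime_of_mem_primeFactors (hLsub hp)
      have h2 : 2 ≤ p := hpp.two_le
      have hnat : (2 : ℕ) ^ K ≤ p - 1 := by omega
      have hreal : (2 : ℝ) ^ K ≤ (p : ℝ) - 1 := by
        calc (2 : ℝ) ^ K = ((2 ^ K : ℕ) : ℝ) := by push_cast; ring
          _ ≤ ((p - 1 : ℕ) : ℝ) := by exact_mod_cast hnat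
          _ = (p : ℝ) - 1 := by push_cast [show 1 ≤ p by omega]; ring
      rw [one_div]
      exact inv_anti₀ (by positivity) hreal
    have hKpos : (0 : ℝ) < K := by exact_mod_cast hK
    calc ∑ p ∈ L, 1 / ((p : ℝ) - 1)
        ≤ L.card • ((2 : ℝ) ^ K)⁻¹ := Finset.sum_le_card_nsmul _ _ _ hterm
      _ = (L.card : ℝ) * ((2 : ℝ) ^ K)⁻¹ := by rw [nsmul_eq_mul]
      _ ≤ 1 := by
          have hc : (K : ℝ) * L.card ≤ 2 ^ K := by
            calc (K : ℝ) * L.card = ((K * L.card : ℕ) : ℝ) := by push_cast; ring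
              _ ≤ ((2 ^ K : ℕ) : ℝ) := by exact_mod_cast hcard
              _ = 2 ^ K := by push_cast; ring
          have hcardle : (L.card : ℝ) ≤ 2 ^ K / K := by
            rw [le_div_iff₀ hKpos]
            linarith [hc]
          have h2K : (0 : ℝ) < 2 ^ K := by positivity
          calc (L.card : ℝ) * ((2 : ℝ) ^ K)⁻¹ ≤ (2 ^ K / K) * ((2 : ℝ) ^ K)⁻¹ :=
                mul_le_mul_of_nonneg_right hcardle (by positivity)
            _ = 1 / K := by
                field_simp
            _ ≤ 1 := by
                rw [div_le_one hKpos]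
                exact_mod_cast hK
  linarith [hsmall, hlarge]

end Mertens

section Final

lemma romanoff_Efinal (S m K : ℕ) (hm : m ≠ 0) (hK : 1 ≤ K) (hmK : m ≤ 2 ^ 2 ^ K) :
    ∑ n ∈ m.divisors, (S : ℝ) ^ n.primeFactors.card / n
      ≤ Real.exp (6 * (S : ℝ)) * (K : ℝ) ^ (4 * S) := by
  refine (romanoff_sumdiv S m hm).trans ?_
  have hmert := romanoff_mert m K hm hK hmK
  have hS0 : (0 : ℝ) ≤ S := Nat.cast_nonneg S
  have h1 : (S : ℝ) * ∑ p ∈ m.primeFactors, 1 / ((p : ℝ) - 1)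
      ≤ (S : ℝ) * (6 + 4 * Real.log K) := mul_le_mul_of_nonneg_left hmert hS0
  calc Real.exp ((S : ℝ) * ∑ p ∈ m.primeFactors, 1 / ((p : ℝ) - 1))
      ≤ Real.exp ((S : ℝ) * (6 + 4 * Real.log K)) := Real.exp_le_exp.2 h1
    _ = Real.exp (6 * (S : ℝ)) * Real.exp (((4 * S : ℕ) : ℝ) * Real.log K) := by
        rw [← Real.exp_add]
        push_cast
        ring_nf
    _ = Real.exp (6 * (S : ℝ)) * (K : ℝ) ^ (4 * S) := by
        rw [Real.exp_nat_mul, Real.exp_log (by exact_mod_cast hK : (0 : ℝ) < K)]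

lemma romanoffM_le_tower (A j : ℕ) (hA : 2 ≤ A) :
    romanoffM A (j + 1) ≤ 2 ^ 2 ^ (A + 2 * j + 2) := by
  refine le_trans (romanoffM_le A (j + 1) hA) ?_
  calc A ^ 4 ^ (j + 1) ≤ (2 ^ A) ^ 4 ^ (j + 1) :=
        Nat.pow_le_pow_left (Nat.le_of_lt (Nat.lt_two_pow_self (n := A))) _
    _ = 2 ^ (A * 4 ^ (j + 1)) := by rw [← pow_mul]
    _ ≤ 2 ^ 2 ^ (A + 2 * j + 2) := by
        apply Nat.pow_le_pow_right (by norm_num)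
        have h4 : (4 : ℕ) ^ (j + 1) = 2 ^ (2 * (j + 1)) := by
          rw [show (4 : ℕ) = 2 ^ 2 by norm_num, ← pow_mul]
        rw [h4]
        calc A * 2 ^ (2 * (j + 1)) ≤ 2 ^ A * 2 ^ (2 * (j + 1)) :=
              Nat.mul_le_mul_right _ (Nat.le_of_lt (Nat.lt_two_pow_self (n := A)))
          _ = 2 ^ (A + 2 * j + 2) := by rw [← pow_add]; ring_nf

theorem stmt_13 (A S : ℕ) (hA : 2 ≤ A) (hS : 1 ≤ S) :
    Summable (fun n : ℕ =>
      if 0 < n ∧ Nat.Coprime n A then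
        (S : ℝ) ^ n.primeFactors.card / ((n : ℝ) * orderOf (A : ZMod n))
      else 0) := by
  set F : ℕ → ℝ := fun n =>
    (S : ℝ) ^ n.primeFactors.card / ((n : ℝ) * orderOf (A : ZMod n)) with hF
  set g : ℕ → ℝ := fun j =>
    Real.exp (6 * (S : ℝ)) * ((A + 2 * j + 2 : ℕ) : ℝ) ^ (4 * S) * (1 / 2) ^ j with hg
  have hgnonneg : ∀ j, 0 ≤ g j := fun j => by rw [hg]; positivity
  -- summability of the majorant
  have hgsum : Summable g := by
    have base : Summable (fun n : ℕ => ((n : ℝ)) ^ (4 * S) * (1 / 2 : ℝ) ^ n) :=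
      summable_pow_mul_geometric_of_norm_lt_one (4 * S)
        (by rw [Real.norm_eq_abs, abs_lt]; constructor <;> norm_num)
    have hshift : Summable (fun j : ℕ => (((j + 1 : ℕ) : ℝ)) ^ (4 * S) * (1 / 2 : ℝ) ^ (j + 1)) := by
      have h5 := (summable_nat_add_iff
        (f := fun n : ℕ => ((n : ℝ)) ^ (4 * S) * (1 / 2 : ℝ) ^ n) 1).2 base
      simpa using h5
    have hc : Summable (fun j : ℕ =>
        (Real.exp (6 * (S : ℝ)) * ((A + 4 : ℕ) : ℝ) ^ (4 * S) * 2) *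
          ((((j + 1 : ℕ) : ℝ)) ^ (4 * S) * (1 / 2 : ℝ) ^ (j + 1))) := hshift.mul_left _
    refine Summable.of_nonneg_of_le hgnonneg (fun j => ?_) hc
    rw [hg]
    have h1 : ((A + 2 * j + 2 : ℕ) : ℝ) ≤ ((A + 4 : ℕ) : ℝ) * ((j + 1 : ℕ) : ℝ) := by
      push_cast
      nlinarith [Nat.cast_nonneg (α := ℝ) A, Nat.cast_nonneg (α := ℝ) j]
    have h2 : ((A + 2 * j + 2 : ℕ) : ℝ) ^ (4 * S)
        ≤ (((A + 4 : ℕ) : ℝ) * ((j + 1 : ℕ) : ℝ)) ^ (4 * S) :=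
      pow_le_pow_left₀ (by positivity) h1 _
    have h3 : ((1 : ℝ) / 2) ^ j = 2 * (1 / 2 : ℝ) ^ (j + 1) := by
      rw [pow_succ]
      ring
    calc Real.exp (6 * (S : ℝ)) * ((A + 2 * j + 2 : ℕ) : ℝ) ^ (4 * S) * (1 / 2) ^ j
        ≤ Real.exp (6 * (S : ℝ)) * ((((A + 4 : ℕ) : ℝ) * ((j + 1 : ℕ) : ℝ)) ^ (4 * S)) *
            (1 / 2) ^ j := by
          have := Real.exp_pos (6 * (S : ℝ))
          have h4 : (0 : ℝ) ≤ (1 / 2 : ℝ) ^ j := by positivity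
          nlinarith [h2, this.le, h4, mul_le_mul_of_nonneg_left h2 this.le]
      _ = (Real.exp (6 * (S : ℝ)) * ((A + 4 : ℕ) : ℝ) ^ (4 * S) * 2) *
            ((((j + 1 : ℕ) : ℝ)) ^ (4 * S) * (1 / 2 : ℝ) ^ (j + 1)) := by
          rw [mul_pow, h3]
          ring
  -- nonnegativity of the terms
  have hnonneg : ∀ n : ℕ, 0 ≤ (if 0 < n ∧ Nat.Coprime n A then F n else 0) := by
    intro n
    split_ifs
    · exact div_nonneg (by positivity) (by positivity)
    · exact le_refl 0
  refine summable_of_sum_range_le (c := ∑' j, g j) hnonneg ?_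
  intro N
  rw [← Finset.sum_filter]
  set s := (Finset.range N).filter (fun n => 0 < n ∧ Nat.Coprime n A) with hs
  have hmaps : ∀ n ∈ s, Nat.log 2 (orderOf (A : ZMod n)) ∈ Finset.range N := by
    intro n hn
    have hmem := Finset.mem_filter.1 hn
    have hnN : n < N := Finset.mem_range.1 hmem.1
    have hn0 : 0 < n := hmem.2.1
    have hncop : Nat.Coprime n A := hmem.2.2
    obtain ⟨-, -, hle⟩ := romanoff_ord A n hA hn0 hncop
    exact Finset.mem_range.2 (lt_of_le_of_lt (le_trans (Nat.log_le_self 2 _) hle) hnN)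
  rw [← Finset.sum_fiberwise_of_maps_to hmaps]
  have hinner : ∀ j ∈ Finset.range N,
      (∑ n ∈ s.filter (fun n => Nat.log 2 (orderOf (A : ZMod n)) = j), F n) ≤ g j := by
    intro j _
    set t := s.filter (fun n => Nat.log 2 (orderOf (A : ZMod n)) = j) with ht
    have hM0 : romanoffM A (j + 1) ≠ 0 := (romanoffM_pos A (j + 1) hA).ne'
    have hsubdiv : t ⊆ (romanoffM A (j + 1)).divisors := by
      intro n hn
      obtain ⟨hns, hnlog⟩ := Finset.mem_filter.1 hn
      have hmem := Finset.mem_filter.1 hns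
      have hn0 : 0 < n := hmem.2.1
      have hncop : Nat.Coprime n A := hmem.2.2
      have hordle : orderOf (A : ZMod n) ≤ 2 ^ (j + 1) := by
        have := Nat.lt_pow_succ_log_self (b := 2) (by norm_num) (orderOf (A : ZMod n))
        rw [hnlog] at this
        omega
      exact Nat.mem_divisors.2 ⟨dvd_romanoffM A n (j + 1) hA hn0 hncop hordle, hM0⟩
    have hstep1 : ∀ n ∈ t, F n ≤ (1 / 2 : ℝ) ^ j * ((S : ℝ) ^ n.primeFactors.card / n) := by
      intro n hn
      obtain ⟨hns, hnlog⟩ := Finset.mem_filter.1 hn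
      have hmem := Finset.mem_filter.1 hns
      have hn0 : 0 < n := hmem.2.1
      have hncop : Nat.Coprime n A := hmem.2.2
      obtain ⟨hord1, -, -⟩ := romanoff_ord A n hA hn0 hncop
      have hordge : (2 : ℕ) ^ j ≤ orderOf (A : ZMod n) := by
        rw [← hnlog]
        exact Nat.pow_log_le_self 2 (by omega)
      have hordgeR : (2 : ℝ) ^ j ≤ (orderOf (A : ZMod n) : ℝ) := by
        exact_mod_cast hordge
      have hnpos : (0 : ℝ) < n := by exact_mod_cast hn0
      have hordpos : (0 : ℝ) < (orderOf (A : ZMod n) : ℝ) := by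
        have : (0 : ℝ) < (2 : ℝ) ^ j := by positivity
        linarith
      rw [hF]
      have hkey : (n : ℝ) * (2 : ℝ) ^ j ≤ (n : ℝ) * (orderOf (A : ZMod n) : ℝ) :=
        mul_le_mul_of_nonneg_left hordgeR hnpos.le
      calc (S : ℝ) ^ n.primeFactors.card / ((n : ℝ) * orderOf (A : ZMod n))
          ≤ (S : ℝ) ^ n.primeFactors.card / ((n : ℝ) * (2 : ℝ) ^ j) := by
            apply div_le_div_of_nonneg_left (by positivity) (by positivity) hkey
        _ = (1 / 2 : ℝ) ^ j * ((S : ℝ) ^ n.primeFactors.card / n) := by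
            rw [div_pow, one_pow]
            field_simp
    calc ∑ n ∈ t, F n
        ≤ ∑ n ∈ t, (1 / 2 : ℝ) ^ j * ((S : ℝ) ^ n.primeFactors.card / n) :=
          Finset.sum_le_sum hstep1
      _ = (1 / 2 : ℝ) ^ j * ∑ n ∈ t, (S : ℝ) ^ n.primeFactors.card / n := by
          rw [Finset.mul_sum]
      _ ≤ (1 / 2 : ℝ) ^ j *
            ∑ n ∈ (romanoffM A (j + 1)).divisors, (S : ℝ) ^ n.primeFactors.card / n := by
          apply mul_le_mul_of_nonneg_left _ (by positivity)
          refine Finset.sum_le_sum_of_subset_of_nonneg hsubdiv fun n _ _ => ?_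
          positivity
      _ ≤ (1 / 2 : ℝ) ^ j *
            (Real.exp (6 * (S : ℝ)) * ((A + 2 * j + 2 : ℕ) : ℝ) ^ (4 * S)) := by
          apply mul_le_mul_of_nonneg_left _ (by positivity)
          exact romanoff_Efinal S _ (A + 2 * j + 2) hM0 (by omega)
            (romanoffM_le_tower A j hA)
      _ = g j := by rw [hg]; ring
  refine le_trans (Finset.sum_le_sum hinner) ?_
  exact Summable.sum_le_tsum (Finset.range N) (fun j _ => hgnonneg j) hgsum

end Final
end

section
/- (Romanoff) For any integer a ≥ 2, the series ∑_{n ≥ 1, gcd(n,a)=1} 1/(n · ℓ_a(n)) converges, where ℓ_a(n) is the multiplicative order of a modulo n. -/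
open Finset Real


lemma inv_one_sub_le_exp {x : ℝ} (hx0 : 0 < x) (hx : x ≤ 1/2) : (1 - x)⁻¹ ≤ Real.exp (2*x) := by
  have h1 : (0:ℝ) < 1 - x := by linarith
  have h2 : (1 - x)⁻¹ ≤ 1 + 2*x := by
    rw [inv_le_iff_one_le_mul₀ h1]
    nlinarith
  calc (1-x)⁻¹ ≤ 1 + 2*x := h2
    _ ≤ Real.exp (2*x) := by linarith [Real.add_one_le_exp (2*x)]

lemma geom_partial_le {x : ℝ} (hx0 : 0 ≤ x) (hx : x < 1) (n : ℕ) :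
    ∑ j ∈ range n, x ^ j ≤ (1 - x)⁻¹ := by
  have h1 : (0:ℝ) < 1 - x := by linarith
  have := geom_sum_eq (by intro h; rw [h] at hx; linarith : x ≠ 1) n
  rw [this, div_le_iff_of_neg (by linarith : x - 1 < 0)]
  have h2 : 0 ≤ x ^ n := pow_nonneg hx0 n
  have h3 : (1-x)⁻¹ * (x-1) = -1 := by field_simp; ring
  linarith

-- per prime-power factor bound
lemma factor_bound {p : ℕ} (hp : p.Prime) (e : ℕ) :
    (∑ k ∈ range (e+1), (p:ℝ)^k) / (p:ℝ)^e ≤ Real.exp (2 * (1/(p:ℝ))) := by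
  have hp2 : (2:ℝ) ≤ p := by exact_mod_cast hp.two_le
  have hp0 : (0:ℝ) < p := by linarith
  have hinv : (0:ℝ) < 1/(p:ℝ) := by positivity
  have hhalf : 1/(p:ℝ) ≤ 1/2 := by
    rw [div_le_div_iff₀ hp0 (by norm_num)]; linarith
  have key : (∑ k ∈ range (e+1), (p:ℝ)^k) / (p:ℝ)^e = ∑ j ∈ range (e+1), (1/(p:ℝ))^j := by
    rw [Finset.sum_div]
    rw [Finset.sum_bij' (fun k _ => e - k) (fun j _ => e - j)]
    · intro k hk; simp only [mem_range] at hk ⊢; omega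
    · intro k hk; simp only [mem_range] at hk ⊢; omega
    · intro k hk; simp only [mem_range] at hk; omega
    · intro k hk; simp only [mem_range] at hk; omega
    · intro k hk; simp only [mem_range] at hk
      rw [div_pow, one_pow, div_eq_div_iff (by positivity) (by positivity), one_mul,
        ← pow_add]
      congr 1; omega
  rw [key]
  calc ∑ j ∈ range (e+1), (1/(p:ℝ))^j ≤ (1 - 1/(p:ℝ))⁻¹ :=
        geom_partial_le (by positivity) (by linarith) _
    _ ≤ Real.exp (2 * (1/(p:ℝ))) := inv_one_sub_le_exp hinv hhalf

lemma recip_divisor_sum_le {m : ℕ} (hm : m ≠ 0) :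
    ∑ d ∈ m.divisors, (1/(d:ℝ)) ≤ Real.exp (2 * ∑ p ∈ m.primeFactors, (1/(p:ℝ))) := by
  have hstep1 : ∑ d ∈ m.divisors, (1/(d:ℝ)) = (∑ d ∈ m.divisors, (d:ℝ)) / m := by
    rw [← Nat.sum_div_divisors m (fun d => (1/(d:ℝ))), Finset.sum_div]
    apply Finset.sum_congr rfl
    intro d hd
    have hdvd : d ∣ m := Nat.dvd_of_mem_divisors hd
    have hd0 : (d:ℝ) ≠ 0 := Nat.cast_ne_zero.mpr (Nat.pos_of_mem_divisors hd).ne'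
    have hm0 : (m:ℝ) ≠ 0 := Nat.cast_ne_zero.mpr hm
    rw [Nat.cast_div hdvd hd0]
    field_simp
  rw [hstep1]
  have hσ := Nat.sum_divisors hm
  have hmprod : (m:ℝ) = ∏ p ∈ m.primeFactors, (p:ℝ) ^ (m.factorization p) := by
    conv_lhs => rw [← Nat.factorization_prod_pow_eq_self hm]
    rw [Finsupp.prod, Nat.support_factorization]
    push_cast
    rfl
  have hnum : (∑ d ∈ m.divisors, (d:ℝ)) =
      ∏ p ∈ m.primeFactors, (∑ k ∈ Finset.range (m.factorization p + 1), (p:ℝ)^k) := by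
    rw [← Nat.cast_sum, hσ]
    push_cast
    rfl
  rw [hnum, hmprod, ← Finset.prod_div_distrib]
  calc ∏ p ∈ m.primeFactors, ((∑ k ∈ Finset.range (m.factorization p + 1), (p:ℝ)^k) / (p:ℝ)^(m.factorization p))
      ≤ ∏ p ∈ m.primeFactors, Real.exp (2 * (1/(p:ℝ))) := by
        apply Finset.prod_le_prod
        · intro p hp
          have := Nat.prime_of_mem_primeFactors hp
          positivity
        · intro p hp
          exact factor_bound (Nat.prime_of_mem_primeFactors hp) _
    _ = Real.exp (2 * ∑ p ∈ m.primeFactors, (1/(p:ℝ))) := by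
        rw [← Real.exp_sum, Finset.mul_sum]


lemma harmonic_le (J : ℕ) : ∑ j ∈ Finset.Icc 1 J, (1/(j:ℝ)) ≤ 1 + Real.log (J+1) := by
  have main : ∀ J : ℕ, 1 ≤ J → ∑ j ∈ Finset.Icc 1 J, (1/(j:ℝ)) ≤ 1 + Real.log J := by
    intro J hJ
    induction J, hJ using Nat.le_induction with
    | base => simp
    | succ J hJ ih =>
      rw [Finset.sum_Icc_succ_top (by omega)]
      have hJ0 : (0:ℝ) < J := by exact_mod_cast hJ
      have hkey : (1:ℝ)/(J+1) ≤ Real.log (J+1) - Real.log J := by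
        set E := Real.exp (1/((J:ℝ)+1)) with hE
        have h4 : 0 < E := Real.exp_pos _
        have h1 : E ≤ ((J:ℝ)+1)/J := by
          have h2 := Real.add_one_le_exp (-(1/((J:ℝ)+1)))
          rw [Real.exp_neg, neg_add_eq_sub, ← hE] at h2
          have h5 : (1 - 1/((J:ℝ)+1)) * E ≤ 1 := by
            calc (1 - 1/((J:ℝ)+1)) * E ≤ E⁻¹ * E := mul_le_mul_of_nonneg_right h2 h4.le
              _ = 1 := inv_mul_cancel₀ h4.ne'
          rw [le_div_iff₀ hJ0]
          have hc : (1/((J:ℝ)+1))*((J:ℝ)+1) = 1 := by field_simp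
          nlinarith
        have h5 : Real.log (((J:ℝ)+1)/J) = Real.log (J+1) - Real.log J :=
          Real.log_div (by positivity) (by positivity)
        have h6 : 1/((J:ℝ)+1) ≤ Real.log (((J:ℝ)+1)/J) := by
          rw [Real.le_log_iff_exp_le (by positivity)]
          exact h1
        linarith
      push_cast
      push_cast at ih hkey
      linarith
  rcases Nat.eq_zero_or_pos J with h | h
  · subst h; simp
  · calc ∑ j ∈ Finset.Icc 1 J, (1/(j:ℝ)) ≤ 1 + Real.log J := main J h
      _ ≤ 1 + Real.log (J+1) := by
        have := Real.log_le_log (by positivity : (0:ℝ) < J) (by push_cast; linarith : (J:ℝ) ≤ J+1)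
        linarith


lemma block_card_bound {j : ℕ} (s : Finset ℕ)
    (hs : ∀ p ∈ s, Nat.Prime p ∧ Nat.log 2 p = j) : s.card * j ≤ 2^(j+2) := by
  have hlow : ∀ p ∈ s, 2^j ≤ p := by
    intro p hp
    obtain ⟨hp1, hp2⟩ := hs p hp
    rw [← hp2]
    exact Nat.pow_log_le_self 2 hp1.pos.ne'
  have h1 : (2^j)^s.card ≤ ∏ p ∈ s, p := Finset.pow_card_le_prod s _ _ hlow
  have h2 : (∏ p ∈ s, p) ∣ primorial (2^(j+1)) := by
    unfold primorial
    have hsub : s ⊆ Finset.filter Nat.Prime (Finset.range (2^(j+1)+1)) := by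
      intro p hp
      obtain ⟨hp1, hp2⟩ := hs p hp
      simp only [Finset.mem_filter, Finset.mem_range]
      refine ⟨?_, hp1⟩
      have := Nat.lt_pow_succ_log_self (by norm_num : 1 < 2) p
      rw [hp2] at this
      omega
    exact Finset.prod_dvd_prod_of_subset _ _ _ hsub
  have h3 : primorial (2^(j+1)) ≤ 4^(2^(j+1)) := primorial_le_4_pow _
  have h4 : (2:ℕ)^(j * s.card) ≤ 2^(2^(j+2)) := by
    calc (2:ℕ)^(j * s.card) = (2^j)^s.card := by rw [pow_mul]
      _ ≤ ∏ p ∈ s, p := h1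
      _ ≤ primorial (2^(j+1)) := Nat.le_of_dvd (primorial_pos _) h2
      _ ≤ 4^(2^(j+1)) := h3
      _ = 2^(2^(j+2)) := by
          rw [(by norm_num : (4:ℕ) = 2^2), ← pow_mul]
          ring_nf
  have := (Nat.pow_le_pow_iff_right (by norm_num : 1 < 2)).mp h4
  rw [mul_comm]; exact this

lemma block_sum_bound {j : ℕ} (hj : 1 ≤ j) (s : Finset ℕ)
    (hs : ∀ p ∈ s, Nat.Prime p ∧ Nat.log 2 p = j) :
    ∑ p ∈ s, (1/(p:ℝ)) ≤ 4 / j := by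
  have hcard := block_card_bound s hs
  have hsum : ∑ p ∈ s, (1/(p:ℝ)) ≤ s.card * ((2:ℝ)^j)⁻¹ := by
    calc ∑ p ∈ s, (1/(p:ℝ)) ≤ ∑ p ∈ s, ((2:ℝ)^j)⁻¹ := by
          apply Finset.sum_le_sum
          intro p hp
          obtain ⟨hp1, hp2⟩ := hs p hp
          have h2 : (2:ℝ)^j ≤ p := by
            have := Nat.pow_log_le_self 2 hp1.pos.ne'
            rw [hp2] at this
            exact_mod_cast this
          rw [one_div]
          exact inv_anti₀ (by positivity) h2
      _ = s.card * ((2:ℝ)^j)⁻¹ := by rw [Finset.sum_const, nsmul_eq_mul]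
  have hj0 : (0:ℝ) < j := by exact_mod_cast hj
  have h2j : (0:ℝ) < 2^j := by positivity
  have hc : (s.card:ℝ) * j ≤ 4 * 2^j := by
    have : ((s.card * j : ℕ):ℝ) ≤ ((2^(j+2) : ℕ):ℝ) := by exact_mod_cast hcard
    push_cast at this
    rw [pow_add] at this
    push_cast at this
    linarith
  calc ∑ p ∈ s, (1/(p:ℝ)) ≤ s.card * ((2:ℝ)^j)⁻¹ := hsum
    _ ≤ 4 / j := by
        rw [mul_inv_le_iff₀ h2j, div_mul_eq_mul_div, le_div_iff₀ hj0]
        linarith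

lemma prime_recip_le (P : ℕ) :
    ∑ p ∈ Finset.filter Nat.Prime (Finset.range (P+1)), (1/(p:ℝ))
      ≤ 4 * (1 + Real.log (Nat.log 2 P + 1)) := by
  classical
  set s := Finset.filter Nat.Prime (Finset.range (P+1)) with hsdef
  set J := Nat.log 2 P with hJ
  have hmap : ∀ p ∈ s, Nat.log 2 p ∈ Finset.range (J+1) := by
    intro p hp
    simp only [hsdef, Finset.mem_filter, Finset.mem_range] at hp
    simp only [Finset.mem_range, hJ]
    have : Nat.log 2 p ≤ Nat.log 2 P := Nat.log_mono_right (by omega)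
    omega
  rw [← Finset.sum_fiberwise_of_maps_to hmap (fun p => (1/(p:ℝ)))]
  have hblock : ∀ j ∈ Finset.range (J+1),
      ∑ p ∈ s.filter (fun p => Nat.log 2 p = j), (1/(p:ℝ)) ≤ if j = 0 then (0:ℝ) else 4/(j:ℝ) := by
    intro j _
    by_cases hj : j = 0
    · subst hj
      simp only [if_pos rfl]
      have : s.filter (fun p => Nat.log 2 p = 0) = ∅ := by
        rw [Finset.filter_eq_empty_iff]
        intro p hp
        simp only [hsdef, Finset.mem_filter] at hp
        have := Nat.log_pos (by norm_num : 1 < 2) hp.2.two_le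
        omega
      rw [this, Finset.sum_empty]
      simp
    · rw [if_neg hj]
      apply block_sum_bound (by omega)
      intro p hp
      simp only [hsdef, Finset.mem_filter] at hp
      exact ⟨hp.1.2, hp.2⟩
  calc ∑ j ∈ Finset.range (J+1), ∑ p ∈ s.filter (fun p => Nat.log 2 p = j), (1/(p:ℝ))
      ≤ ∑ j ∈ Finset.range (J+1), (if j = 0 then 0 else 4/(j:ℝ)) := Finset.sum_le_sum hblock
    _ = ∑ j ∈ Finset.Icc 1 J, 4/(j:ℝ) := by
        have hr : Finset.range (J+1) = insert 0 (Finset.Icc 1 J) := by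
          ext x; simp [Finset.mem_range, Finset.mem_Icc]; omega
        rw [hr, Finset.sum_insert (by simp), if_pos rfl, zero_add]
        apply Finset.sum_congr rfl
        intro j hj
        simp only [Finset.mem_Icc] at hj
        rw [if_neg (by omega)]
    _ = 4 * ∑ j ∈ Finset.Icc 1 J, (1/(j:ℝ)) := by
        rw [Finset.mul_sum]
        apply Finset.sum_congr rfl
        intro j _
        rw [mul_one_div]
    _ ≤ 4 * (1 + Real.log (J+1)) := by
        have := harmonic_le J
        linarith



-- basic facts about M = ∏_{d=1}^y (a^d - 1)
lemma M_ne_zero {a : ℕ} (ha : 2 ≤ a) (y : ℕ) : (∏ d ∈ Finset.Icc 1 y, (a^d - 1)) ≠ 0 := by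
  apply Finset.prod_ne_zero_iff.mpr
  intro d hd
  simp only [Finset.mem_Icc] at hd
  have : 2 ≤ a^d := le_trans ha (Nat.le_self_pow (by omega) a)
  omega

lemma M_le {a : ℕ} (ha : 2 ≤ a) (y : ℕ) :
    (∏ d ∈ Finset.Icc 1 y, (a^d - 1)) ≤ 2^(a*y*y) := by
  calc (∏ d ∈ Finset.Icc 1 y, (a^d - 1)) ≤ ∏ d ∈ Finset.Icc 1 y, a^d := by
        apply Finset.prod_le_prod'
        intro d _; omega
    _ = a^(∑ d ∈ Finset.Icc 1 y, d) := by rw [← Finset.prod_pow_eq_pow_sum]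
    _ ≤ a^(y*y) := by
        apply Nat.pow_le_pow_right (by omega)
        calc ∑ d ∈ Finset.Icc 1 y, d ≤ ∑ d ∈ Finset.Icc 1 y, y := by
              apply Finset.sum_le_sum; intro d hd; simp only [Finset.mem_Icc] at hd; omega
          _ = (Finset.Icc 1 y).card * y := by rw [Finset.sum_const, smul_eq_mul]
          _ ≤ y*y := by rw [Nat.card_Icc, Nat.add_sub_cancel]
    _ ≤ (2^a)^(y*y) := Nat.pow_le_pow_left (le_of_lt (Nat.lt_two_pow_self (n := a))) _
    _ = 2^(a*y*y) := by rw [← pow_mul, mul_assoc]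

lemma omega_le {m : ℕ} (hm : m ≠ 0) : 2^(m.primeFactors.card) ≤ m := by
  calc (2:ℕ)^(m.primeFactors.card) = ∏ _p ∈ m.primeFactors, 2 := by
        rw [Finset.prod_const]
    _ ≤ ∏ p ∈ m.primeFactors, p := by
        apply Finset.prod_le_prod'
        intro p hp; exact (Nat.prime_of_mem_primeFactors hp).two_le
    _ ≤ m := Nat.le_of_dvd (Nat.pos_of_ne_zero hm) (Nat.prod_primeFactors_dvd m)

lemma primefactors_recip_le {a : ℕ} (ha : 2 ≤ a) {y : ℕ} (hy : 1 ≤ y) :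
    ∑ p ∈ (∏ d ∈ Finset.Icc 1 y, (a^d - 1)).primeFactors, (1/(p:ℝ))
      ≤ 4 * (1 + Real.log (Nat.log 2 (a*y*y) + 1)) + 1 := by
  classical
  set m := ∏ d ∈ Finset.Icc 1 y, (a^d - 1) with hmdef
  set P := a*y*y with hP
  have hω : m.primeFactors.card ≤ P := by
    have h1 : (2:ℕ)^(m.primeFactors.card) ≤ 2^P := le_trans (omega_le (M_ne_zero ha y)) (M_le ha y)
    exact (Nat.pow_le_pow_iff_right (by norm_num)).mp h1
  have hsplit : m.primeFactors = (m.primeFactors.filter (fun p => p ≤ P)) ∪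
      (m.primeFactors.filter (fun p => ¬ p ≤ P)) := (Finset.filter_union_filter_not_eq (p := fun p => p ≤ P) m.primeFactors).symm
  rw [hsplit, Finset.sum_union (Finset.disjoint_filter_filter_not _ _ _)]
  have h1 : ∑ p ∈ m.primeFactors.filter (fun p => p ≤ P), (1/(p:ℝ))
      ≤ ∑ p ∈ Finset.filter Nat.Prime (Finset.range (P+1)), (1/(p:ℝ)) := by
    apply Finset.sum_le_sum_of_subset_of_nonneg
    · intro p hp
      simp only [Finset.mem_filter, Finset.mem_range] at hp ⊢
      exact ⟨by omega, Nat.prime_of_mem_primeFactors hp.1⟩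
    · intro p _ _; positivity
  have h2 : ∑ p ∈ m.primeFactors.filter (fun p => ¬ p ≤ P), (1/(p:ℝ)) ≤ 1 := by
    have hPpos : 0 < P := by
      have : 1 ≤ a*y*y := Nat.one_le_iff_ne_zero.mpr (by positivity)
      omega
    calc ∑ p ∈ m.primeFactors.filter (fun p => ¬ p ≤ P), (1/(p:ℝ))
        ≤ ∑ _p ∈ m.primeFactors.filter (fun p => ¬ p ≤ P), (1/(P:ℝ)) := by
          apply Finset.sum_le_sum
          intro p hp
          simp only [Finset.mem_filter] at hp
          have hpP : (P:ℝ) ≤ p := by exact_mod_cast (by omega : P ≤ p)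
          apply div_le_div_of_nonneg_left (by norm_num) (by exact_mod_cast hPpos) hpP
      _ = (m.primeFactors.filter (fun p => ¬ p ≤ P)).card * (1/(P:ℝ)) := by
          rw [Finset.sum_const, nsmul_eq_mul]
      _ ≤ P * (1/(P:ℝ)) := by
          apply mul_le_mul_of_nonneg_right _ (by positivity)
          have : (m.primeFactors.filter (fun p => ¬ p ≤ P)).card ≤ m.primeFactors.card :=
            Finset.card_filter_le _ _
          exact_mod_cast le_trans this hω
      _ = 1 := by field_simp
  have := prime_recip_le P
  linarith

lemma master {a : ℕ} (ha : 2 ≤ a) {y : ℕ} (hy : 1 ≤ y) :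
    ∑ d ∈ (∏ d ∈ Finset.Icc 1 y, (a^d - 1)).divisors, (1/(d:ℝ))
      ≤ Real.exp 10 * (2*Real.log a + 65)^8 * (y:ℝ)^((1:ℝ)/2) := by
  set J := Nat.log 2 (a*y*y) with hJdef
  set L := Real.log (J+1) with hLdef
  have hy0 : (0:ℝ) < y := by exact_mod_cast hy
  have hla : 0 ≤ Real.log a := Real.log_nonneg (by exact_mod_cast le_trans (by norm_num) ha)
  have h1 := recip_divisor_sum_le (M_ne_zero ha y)
  have h2 := primefactors_recip_le ha hy
  have h3 : ∑ d ∈ (∏ d ∈ Finset.Icc 1 y, (a^d - 1)).divisors, (1/(d:ℝ))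
      ≤ Real.exp (10 + 8*L) := by
    calc ∑ d ∈ (∏ d ∈ Finset.Icc 1 y, (a^d - 1)).divisors, (1/(d:ℝ))
        ≤ Real.exp (2 * ∑ p ∈ (∏ d ∈ Finset.Icc 1 y, (a^d - 1)).primeFactors, (1/(p:ℝ))) := h1
      _ ≤ Real.exp (10 + 8*L) := by
          rw [Real.exp_le_exp]
          rw [← hJdef, ← hLdef] at h2
          linarith
  have hexp : Real.exp (10 + 8*L) = Real.exp 10 * ((J:ℝ)+1)^8 := by
    rw [Real.exp_add]
    congr 1
    rw [hLdef, (by norm_num : (8:ℝ)*Real.log (J+1) = (8:ℕ)*Real.log (J+1)), Real.exp_nat_mul,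
      Real.exp_log (by positivity)]
  -- bound J+1
  have hJb : ((J:ℝ)+1) ≤ (2*Real.log a + 65) * (y:ℝ)^((1:ℝ)/16) := by
    have hm0 : a*y*y ≠ 0 := by positivity
    have hJ1 : (2:ℕ)^J ≤ a*y*y := Nat.pow_log_le_self 2 hm0
    have hJ2 : (J:ℝ) * Real.log 2 ≤ Real.log (a*y*y) := by
      have := Real.log_le_log (by positivity : (0:ℝ) < (2:ℝ)^J)
        (by exact_mod_cast hJ1 : ((2:ℝ)^J ≤ (a:ℝ)*y*y))
      rw [Real.log_pow] at this; linarith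
    have hlog2 : (1:ℝ)/2 ≤ Real.log 2 := by
      have := Real.log_two_gt_d9; linarith
    have hJ3 : (J:ℝ) ≤ 2 * Real.log ((a:ℝ)*y*y) := by
      have hone : (1:ℝ) ≤ (a:ℝ)*y*y := by
        have h9 : 1 ≤ a*y*y := Nat.one_le_iff_ne_zero.mpr hm0
        exact_mod_cast h9
      nlinarith [Real.log_nonneg hone, (by positivity : (0:ℝ) ≤ (J:ℝ))]
    have hsplit : Real.log ((a:ℝ)*y*y) = Real.log a + Real.log y + Real.log y := by
      rw [Real.log_mul (by positivity) hy0.ne', Real.log_mul (by positivity) hy0.ne']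
    have hly : Real.log y ≤ 16 * (y:ℝ)^((1:ℝ)/16) := by
      have h5 : Real.log ((y:ℝ)^((1:ℝ)/16)) = (1/16) * Real.log y := Real.log_rpow hy0 _
      have h6 : Real.log ((y:ℝ)^((1:ℝ)/16)) ≤ (y:ℝ)^((1:ℝ)/16) := by
        have := Real.log_le_sub_one_of_pos (by positivity : (0:ℝ) < (y:ℝ)^((1:ℝ)/16))
        linarith
      linarith
    have ht1 : (1:ℝ) ≤ (y:ℝ)^((1:ℝ)/16) := Real.one_le_rpow (by exact_mod_cast hy) (by norm_num)
    nlinarith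
  calc ∑ d ∈ (∏ d ∈ Finset.Icc 1 y, (a^d - 1)).divisors, (1/(d:ℝ))
      ≤ Real.exp (10 + 8*L) := h3
    _ = Real.exp 10 * ((J:ℝ)+1)^8 := hexp
    _ ≤ Real.exp 10 * ((2*Real.log a + 65) * (y:ℝ)^((1:ℝ)/16))^8 := by
        apply mul_le_mul_of_nonneg_left _ (Real.exp_pos 10).le
        exact pow_le_pow_left₀ (by positivity) hJb 8
    _ = Real.exp 10 * (2*Real.log a + 65)^8 * (y:ℝ)^((1:ℝ)/2) := by
        rw [mul_pow, ← Real.rpow_natCast ((y:ℝ)^((1:ℝ)/16)) 8, ← Real.rpow_mul hy0.le]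
        norm_num
        ring


lemma order_facts (a n : ℕ) (ha : 2 ≤ a) (hn : 0 < n) (h : Nat.Coprime n a) :
    1 ≤ orderOf (a : ZMod n) ∧ orderOf (a : ZMod n) ≤ n ∧
      n ∣ a ^ orderOf (a : ZMod n) - 1 := by
  haveI : NeZero n := ⟨hn.ne'⟩
  set ℓ := orderOf (a : ZMod n) with hℓ
  have hu : orderOf (ZMod.unitOfCoprime a h.symm : ZMod n) = orderOf (ZMod.unitOfCoprime a h.symm) := orderOf_units
  have hcoe : ((ZMod.unitOfCoprime a h.symm : ZMod n)) = (a : ZMod n) := ZMod.coe_unitOfCoprime a h.symm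
  have hpos : 0 < orderOf (ZMod.unitOfCoprime a h.symm) := orderOf_pos _
  have hdvd : orderOf (ZMod.unitOfCoprime a h.symm) ∣ Fintype.card (ZMod n)ˣ := orderOf_dvd_card
  have hcard : Fintype.card (ZMod n)ˣ = Nat.totient n := ZMod.card_units_eq_totient n
  have h1 : 1 ≤ ℓ := by rw [hℓ, ← hcoe, hu]; exact hpos
  have h2 : ℓ ≤ n := by
    rw [hℓ, ← hcoe, hu]
    exact le_trans (Nat.le_of_dvd (by rw [hcard]; exact Nat.totient_pos.mpr hn) hdvd |>.trans (by rw [hcard]; exact Nat.totient_le n)) le_rfl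
  refine ⟨h1, h2, ?_⟩
  have hpow : (a : ZMod n) ^ ℓ = 1 := pow_orderOf_eq_one _
  have hone : 1 ≤ a ^ ℓ := Nat.one_le_pow _ _ (by omega)
  have : ((a ^ ℓ - 1 : ℕ) : ZMod n) = 0 := by
    push_cast [hone]
    rw [hpow]; ring
  exact (ZMod.natCast_eq_zero_iff _ _).mp this





lemma telescope_sum (m N : ℕ) (hm : 1 ≤ m) (h : m ≤ N) :
    ∑ y ∈ Finset.Ico m N, (1/(y:ℝ) - 1/((y:ℝ)+1)) = 1/(m:ℝ) - 1/(N:ℝ) := by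
  induction N, h using Nat.le_induction with
  | base => simp
  | succ N hN ih =>
    rw [Finset.sum_Ico_succ_top hN, ih]
    push_cast
    ring

lemma aux_rpow {y : ℕ} (hy : 1 ≤ y) :
    ((y:ℝ))^((1:ℝ)/2) * (1/(y:ℝ) - 1/((y:ℝ)+1)) ≤ 1/((y:ℝ)^((3:ℝ)/2)) := by
  have hy0 : (0:ℝ) < y := by exact_mod_cast hy
  have he : 1/(y:ℝ) - 1/((y:ℝ)+1) = 1/((y:ℝ)*((y:ℝ)+1)) := by
    field_simp
    ring
  have hyy : ((y:ℝ))^((1:ℝ)/2) * ((y:ℝ))^((3:ℝ)/2) = (y:ℝ) * (y:ℝ) := by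
    rw [← Real.rpow_add hy0, show (1:ℝ)/2 + 3/2 = ((2:ℕ):ℝ) by norm_num, Real.rpow_natCast]
    ring
  rw [le_div_iff₀ (Real.rpow_pos_of_pos hy0 _), he]
  calc ((y:ℝ))^((1:ℝ)/2) * (1/((y:ℝ)*((y:ℝ)+1))) * ((y:ℝ))^((3:ℝ)/2)
      = (((y:ℝ))^((1:ℝ)/2) * ((y:ℝ))^((3:ℝ)/2)) * (1/((y:ℝ)*((y:ℝ)+1))) := by ring
    _ = ((y:ℝ)*(y:ℝ)) * (1/((y:ℝ)*((y:ℝ)+1))) := by rw [hyy]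
    _ ≤ 1 := by
        rw [mul_one_div, div_le_one (by positivity)]
        nlinarith

theorem stmt_14 (a : ℕ) (ha : 2 ≤ a) :
    Summable (fun n : ℕ =>
      if 0 < n ∧ Nat.Coprime n a then
        (1 : ℝ) / ((n : ℝ) * orderOf (a : ZMod n))
      else 0) := by
  classical
  set K := Real.exp 10 * (2*Real.log (a:ℝ) + 65)^8 with hK
  have hK0 : 0 ≤ K := by positivity
  set c := ∑' (y:ℕ), 1/((y:ℝ)^((3:ℝ)/2)) with hc
  have hsum32 : Summable (fun y:ℕ => 1/((y:ℝ)^((3:ℝ)/2))) := by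
    simpa using Real.summable_one_div_nat_rpow.mpr (by norm_num : (1:ℝ) < 3/2)
  have hc0 : 0 ≤ c := tsum_nonneg (fun y => by positivity)
  apply summable_of_sum_range_le (c := K*c + K)
  · intro n
    split_ifs with h
    · positivity
    · exact le_rfl
  · intro N
    rcases Nat.eq_zero_or_pos N with hN | hN
    · subst hN; simp; positivity
    set ℓ : ℕ → ℕ := fun n => orderOf (a : ZMod n) with hℓ
    set s : Finset ℕ := (Finset.range N).filter (fun n => 0 < n ∧ Nat.Coprime n a) with hs
    have hT : ∑ i ∈ Finset.range N, (if 0 < i ∧ Nat.Coprime i a then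
        (1 : ℝ) / ((i : ℝ) * orderOf (a : ZMod i)) else 0)
        = ∑ n ∈ s, (1:ℝ)/((n:ℝ)*(ℓ n : ℝ)) := by
      rw [hs, Finset.sum_filter]
    rw [hT]
    -- facts about members of s
    have hmem : ∀ n ∈ s, 0 < n ∧ n.Coprime a ∧ 1 ≤ ℓ n ∧ ℓ n ≤ n ∧ n ∣ a ^ (ℓ n) - 1 := by
      intro n hn
      rw [hs, Finset.mem_filter] at hn
      obtain ⟨-, hn1, hn2⟩ := hn
      obtain ⟨o1, o2, o3⟩ := order_facts a n ha hn1 hn2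
      exact ⟨hn1, hn2, o1, o2, o3⟩
    have hmemN : ∀ n ∈ s, n < N := by
      intro n hn; rw [hs, Finset.mem_filter, Finset.mem_range] at hn; exact hn.1
    -- rewrite each term
    have hterm : ∀ n ∈ s, (1:ℝ)/((n:ℝ)*(ℓ n : ℝ)) =
        (∑ y ∈ Finset.Ico 1 N, (if ℓ n ≤ y then (1/(n:ℝ))*(1/(y:ℝ) - 1/((y:ℝ)+1)) else 0))
          + (1/(n:ℝ))*(1/(N:ℝ)) := by
      intro n hn
      obtain ⟨hn1, -, hl1, hl2, -⟩ := hmem n hn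
      have hlN : ℓ n ≤ N := le_trans hl2 (le_of_lt (hmemN n hn))
      have htel := telescope_sum (ℓ n) N hl1 hlN
      have hfilter : (Finset.Ico 1 N).filter (fun y => ℓ n ≤ y) = Finset.Ico (ℓ n) N := by
        ext x
        simp only [Finset.mem_filter, Finset.mem_Ico]
        omega
      have h2 : ∑ y ∈ Finset.Ico 1 N, (if ℓ n ≤ y then (1/(n:ℝ))*(1/(y:ℝ) - 1/((y:ℝ)+1)) else 0)
          = (1/(n:ℝ)) * ∑ y ∈ Finset.Ico (ℓ n) N, (1/(y:ℝ) - 1/((y:ℝ)+1)) := by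
        rw [← Finset.sum_filter, hfilter, Finset.mul_sum]
      rw [h2, htel]
      have hn0 : ((n:ℝ)) ≠ 0 := by positivity
      have hl0 : ((ℓ n : ℕ):ℝ) ≠ 0 := by
        have : (0:ℝ) < (ℓ n : ℕ) := by exact_mod_cast hl1
        exact this.ne'
      have hN0 : ((N:ℝ)) ≠ 0 := by
        have : (0:ℝ) < N := by exact_mod_cast hN
        exact this.ne'
      field_simp
      ring
    rw [Finset.sum_congr rfl hterm, Finset.sum_add_distrib]
    -- swap
    rw [Finset.sum_comm]
    -- bound the double sum
    have hDbound : ∀ y : ℕ, 1 ≤ y →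
        ∑ n ∈ s.filter (fun n => ℓ n ≤ y), (1/(n:ℝ)) ≤ K * (y:ℝ)^((1:ℝ)/2) := by
      intro y hy
      have hsub : s.filter (fun n => ℓ n ≤ y) ⊆ (∏ d ∈ Finset.Icc 1 y, (a^d - 1)).divisors := by
        intro n hn
        rw [Finset.mem_filter] at hn
        obtain ⟨hns, hny⟩ := hn
        obtain ⟨hn1, -, hl1, -, hdvd⟩ := hmem n hns
        rw [Nat.mem_divisors]
        refine ⟨dvd_trans hdvd ?_, M_ne_zero ha y⟩
        exact Finset.dvd_prod_of_mem _ (Finset.mem_Icc.mpr ⟨hl1, hny⟩)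
      calc ∑ n ∈ s.filter (fun n => ℓ n ≤ y), (1/(n:ℝ))
          ≤ ∑ d ∈ (∏ d ∈ Finset.Icc 1 y, (a^d - 1)).divisors, (1/(d:ℝ)) := by
            apply Finset.sum_le_sum_of_subset_of_nonneg hsub
            intro d _ _; positivity
        _ ≤ K * (y:ℝ)^((1:ℝ)/2) := master ha hy
    have hmain : ∑ y ∈ Finset.Ico 1 N, ∑ n ∈ s,
        (if ℓ n ≤ y then (1/(n:ℝ))*(1/(y:ℝ) - 1/((y:ℝ)+1)) else 0) ≤ K * c := by
      calc ∑ y ∈ Finset.Ico 1 N, ∑ n ∈ s,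
            (if ℓ n ≤ y then (1/(n:ℝ))*(1/(y:ℝ) - 1/((y:ℝ)+1)) else 0)
          ≤ ∑ y ∈ Finset.Ico 1 N, K * (1/((y:ℝ)^((3:ℝ)/2))) := by
            apply Finset.sum_le_sum
            intro y hy
            rw [Finset.mem_Ico] at hy
            have hy1 : 1 ≤ y := hy.1
            have hy0 : (0:ℝ) < y := by exact_mod_cast hy1
            have hhy : (0:ℝ) ≤ 1/(y:ℝ) - 1/((y:ℝ)+1) := by
              rw [sub_nonneg]
              apply one_div_le_one_div_of_le hy0
              linarith
            have hinner : ∑ n ∈ s, (if ℓ n ≤ y then (1/(n:ℝ))*(1/(y:ℝ) - 1/((y:ℝ)+1)) else 0)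
                = (1/(y:ℝ) - 1/((y:ℝ)+1)) * ∑ n ∈ s.filter (fun n => ℓ n ≤ y), (1/(n:ℝ)) := by
              rw [← Finset.sum_filter, Finset.mul_sum]
              apply Finset.sum_congr rfl
              intro n _
              ring
            rw [hinner]
            calc (1/(y:ℝ) - 1/((y:ℝ)+1)) * ∑ n ∈ s.filter (fun n => ℓ n ≤ y), (1/(n:ℝ))
                ≤ (1/(y:ℝ) - 1/((y:ℝ)+1)) * (K * (y:ℝ)^((1:ℝ)/2)) :=
                  mul_le_mul_of_nonneg_left (hDbound y hy1) hhy
              _ = K * (((y:ℝ))^((1:ℝ)/2) * (1/(y:ℝ) - 1/((y:ℝ)+1))) := by ring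
              _ ≤ K * (1/((y:ℝ)^((3:ℝ)/2))) :=
                  mul_le_mul_of_nonneg_left (aux_rpow hy1) hK0
        _ = K * ∑ y ∈ Finset.Ico 1 N, (1/((y:ℝ)^((3:ℝ)/2))) := by rw [Finset.mul_sum]
        _ ≤ K * c := by
            apply mul_le_mul_of_nonneg_left _ hK0
            rw [hc]
            apply Summable.sum_le_tsum _ (fun i _ => by positivity) hsum32
    have hlast : ∑ n ∈ s, (1/(n:ℝ))*(1/(N:ℝ)) ≤ K := by
      have hssub : s ⊆ (∏ d ∈ Finset.Icc 1 N, (a^d - 1)).divisors := by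
        intro n hn
        obtain ⟨hn1, -, hl1, hl2, hdvd⟩ := hmem n hn
        rw [Nat.mem_divisors]
        refine ⟨dvd_trans hdvd ?_, M_ne_zero ha N⟩
        exact Finset.dvd_prod_of_mem _ (Finset.mem_Icc.mpr ⟨hl1, le_trans hl2 (le_of_lt (hmemN n hn))⟩)
      have hN0 : (0:ℝ) < N := by exact_mod_cast hN
      calc ∑ n ∈ s, (1/(n:ℝ))*(1/(N:ℝ)) = (1/(N:ℝ)) * ∑ n ∈ s, (1/(n:ℝ)) := by
            rw [Finset.mul_sum]; apply Finset.sum_congr rfl; intro n _; ring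
        _ ≤ (1/(N:ℝ)) * (K * (N:ℝ)^((1:ℝ)/2)) := by
            apply mul_le_mul_of_nonneg_left _ (by positivity)
            calc ∑ n ∈ s, (1/(n:ℝ))
                ≤ ∑ d ∈ (∏ d ∈ Finset.Icc 1 N, (a^d - 1)).divisors, (1/(d:ℝ)) := by
                  apply Finset.sum_le_sum_of_subset_of_nonneg hssub
                  intro d _ _; positivity
              _ ≤ K * (N:ℝ)^((1:ℝ)/2) := master ha hN
        _ ≤ K := by
            have h12 : (N:ℝ)^((1:ℝ)/2) ≤ (N:ℝ) := by
              have h1N : (1:ℝ) ≤ N := by exact_mod_cast hN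
              calc (N:ℝ)^((1:ℝ)/2) ≤ (N:ℝ)^((1:ℝ)) :=
                    Real.rpow_le_rpow_of_exponent_le h1N (by norm_num)
                _ = (N:ℝ) := Real.rpow_one _
            calc (1/(N:ℝ))*(K*(N:ℝ)^((1:ℝ)/2)) = K * ((N:ℝ)^((1:ℝ)/2)/(N:ℝ)) := by ring
              _ ≤ K * 1 := mul_le_mul_of_nonneg_left ((div_le_one hN0).mpr h12) hK0
              _ = K := mul_one K
    linarith
end

section
/- Let j and a be fixed nonzero integers and suppose the series ∑_{d' ≥ 1, gcd(a,d')=1} 2^{ω(d')}/(d'·ℓ_a(d')) converges. Then ∑_{d ≥ 1, gcd(a, d/gcd(d,ja))=1} 2^{ω(d)}/(d · ℓ_a(d/gcd(d,ja))) ≤ (∑_{B | ja} 2^{ω(B)}/B) · (∑_{d', gcd(a,d')=1} 2^{ω(d')}/(d'·ℓ_a(d'))), and in particular this sum is finite. -/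
theorem stmt_16 (a : ℕ) (ha : 2 ≤ a) (j : ℤ) (hj : j ≠ 0)
    (hconv : Summable (fun d' : ℕ =>
      if 0 < d' ∧ Nat.Coprime a d' then
        (2 : ℝ) ^ d'.primeFactors.card / ((d' : ℝ) * orderOf ((a : ℕ) : ZMod d'))
      else 0)) :
    (∑' d : ℕ,
      if 0 < d ∧ Nat.Coprime a (d / Nat.gcd d (j * (a : ℤ)).natAbs) then
        (2 : ℝ) ^ d.primeFactors.card /
          ((d : ℝ) * orderOf ((a : ℕ) : ZMod (d / Nat.gcd d (j * (a : ℤ)).natAbs)))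
      else 0) ≤
    (∑ B ∈ (j * (a : ℤ)).natAbs.divisors, (2 : ℝ) ^ B.primeFactors.card / B) *
      (∑' d' : ℕ,
        if 0 < d' ∧ Nat.Coprime a d' then
          (2 : ℝ) ^ d'.primeFactors.card / ((d' : ℝ) * orderOf ((a : ℕ) : ZMod d'))
        else 0) := by
  set N : ℕ := (j * (a : ℤ)).natAbs with hNdef
  have hN0 : N ≠ 0 := by
    simp only [hNdef, Int.natAbs_ne_zero]
    exact mul_ne_zero hj (by exact_mod_cast (by omega : a ≠ 0))
  set f : ℕ → ℝ := fun d' =>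
    if 0 < d' ∧ Nat.Coprime a d' then
      (2 : ℝ) ^ d'.primeFactors.card / ((d' : ℝ) * orderOf ((a : ℕ) : ZMod d'))
    else 0 with hfdef
  have hf0 : ∀ d', 0 ≤ f d' := by
    intro d'; simp only [hfdef]; split <;> positivity
  set h : ℕ → ℝ := fun B => (2 : ℝ) ^ B.primeFactors.card / B with hhdef
  have hh0 : ∀ B, 0 ≤ h B := by intro B; simp only [hhdef]; positivity
  have htsum0 : 0 ≤ ∑' d', f d' := tsum_nonneg hf0
  set g : ℕ → ℝ := fun d =>
    if 0 < d ∧ Nat.Coprime a (d / Nat.gcd d N) then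
      (2 : ℝ) ^ d.primeFactors.card /
        ((d : ℝ) * orderOf ((a : ℕ) : ZMod (d / Nat.gcd d N)))
    else 0 with hgdef
  -- pointwise bound
  have key : ∀ d : ℕ, 0 < d → g d ≤ h (Nat.gcd d N) * f (d / Nat.gcd d N) := by
    intro d hd
    by_cases hP : Nat.Coprime a (d / Nat.gcd d N)
    · have hBd : Nat.gcd d N ∣ d := Nat.gcd_dvd_left d N
      set B := Nat.gcd d N with hB
      set d' := d / B with hd'
      have hB0 : 0 < B := Nat.gcd_pos_of_pos_left N hd
      have hd'0 : 0 < d' := Nat.div_pos (Nat.le_of_dvd hd hBd) hB0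
      have hmul : B * d' = d := Nat.mul_div_cancel' hBd
      haveI : NeZero d' := ⟨hd'0.ne'⟩
      -- order is positive
      have hordpos : 0 < orderOf ((a : ℕ) : ZMod d') := by
        have h1 : orderOf (((ZMod.unitOfCoprime a hP : (ZMod d')ˣ)) : ZMod d') =
            orderOf (ZMod.unitOfCoprime a hP) := orderOf_units
        rw [ZMod.coe_unitOfCoprime] at h1
        rw [h1]
        exact orderOf_pos _
      have hfval : f d' = (2 : ℝ) ^ d'.primeFactors.card /
          ((d' : ℝ) * orderOf ((a : ℕ) : ZMod d')) := by
        simp only [hfdef, if_pos (And.intro hd'0 hP)]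
      have hgval : g d = (2 : ℝ) ^ d.primeFactors.card /
          ((d : ℝ) * orderOf ((a : ℕ) : ZMod d')) := by
        simp only [hgdef]; exact if_pos (And.intro hd hP)
      rw [hgval, hfval, hhdef]
      have hnum : (2 : ℝ) ^ d.primeFactors.card ≤
          (2 : ℝ) ^ B.primeFactors.card * (2 : ℝ) ^ d'.primeFactors.card := by
        rw [← pow_add]
        apply pow_le_pow_right₀ (by norm_num)
        calc d.primeFactors.card = (B * d').primeFactors.card := by rw [hmul]
          _ = (B.primeFactors ∪ d'.primeFactors).card := by
              rw [Nat.primeFactors_mul hB0.ne' hd'0.ne']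
          _ ≤ B.primeFactors.card + d'.primeFactors.card := Finset.card_union_le _ _
      have hden : (d : ℝ) * orderOf ((a : ℕ) : ZMod d') =
          (B : ℝ) * ((d' : ℝ) * orderOf ((a : ℕ) : ZMod d')) := by
        rw [← hmul]; push_cast; ring
      rw [div_mul_div_comm, hden]
      apply div_le_div_of_nonneg_right hnum ?_ |>.trans_eq rfl
      · positivity
    · have : g d = 0 := by simp only [hgdef, hP, and_false, if_false]
      rw [this]
      exact mul_nonneg (hh0 _) (hf0 _)
  -- main estimate
  apply tsum_le_of_sum_le'
  · exact mul_nonneg (Finset.sum_nonneg fun B _ => hh0 B) htsum0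
  intro S
  have step1 : ∑ d ∈ S, g d ≤
      ∑ d ∈ S.filter (fun d => 0 < d), h (Nat.gcd d N) * f (d / Nat.gcd d N) := by
    rw [← Finset.sum_filter_add_sum_filter_not S (fun d => 0 < d)]
    have h2 : ∑ d ∈ S.filter (fun d => ¬ 0 < d), g d = 0 := by
      apply Finset.sum_eq_zero
      intro d hd
      simp only [Finset.mem_filter] at hd
      simp [hgdef, hd.2]
    rw [h2, add_zero]
    apply Finset.sum_le_sum
    intro d hd
    exact key d (Finset.mem_filter.mp hd).2
  refine step1.trans ?_
  rw [← Finset.sum_fiberwise_of_maps_to (g := fun d => Nat.gcd d N)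
    (t := N.divisors) ?_ (fun d => h (Nat.gcd d N) * f (d / Nat.gcd d N))]
  · rw [Finset.sum_mul]
    apply Finset.sum_le_sum
    intro B hB
    have hfiber : ∀ d ∈ (S.filter (fun d => 0 < d)).filter (fun d => Nat.gcd d N = B),
        h (Nat.gcd d N) * f (d / Nat.gcd d N) = h B * f (d / B) := by
      intro d hd
      simp only [Finset.mem_filter] at hd
      rw [hd.2]
    rw [Finset.sum_congr rfl hfiber, ← Finset.mul_sum]
    apply mul_le_mul_of_nonneg_left ?_ (hh0 B)
    -- sum of f (d / B) over fiber ≤ tsum f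
    have hinj : ∀ x ∈ (S.filter (fun d => 0 < d)).filter (fun d => Nat.gcd d N = B),
        ∀ y ∈ (S.filter (fun d => 0 < d)).filter (fun d => Nat.gcd d N = B),
        x / B = y / B → x = y := by
      intro x hx y hy hxy
      simp only [Finset.mem_filter] at hx hy
      have hx' : B * (x / B) = x := Nat.mul_div_cancel' (hx.2 ▸ Nat.gcd_dvd_left x N)
      have hy' : B * (y / B) = y := Nat.mul_div_cancel' (hy.2 ▸ Nat.gcd_dvd_left y N)
      rw [← hx', ← hy', hxy]
    rw [← Finset.sum_image hinj]
    exact Summable.sum_le_tsum _ (fun i _ => hf0 i) hconv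
  · intro d hd
    simp only [Finset.mem_filter] at hd
    exact Nat.mem_divisors.mpr ⟨Nat.gcd_dvd_right d N, hN0⟩
end

section
/- Fix an integer K ≥ 2. For every real M there exist, for each integer 2 ≤ a ≤ K, a finite set P_a of primes such that: (i) for every p ∈ P_a, the largest prime factor q_p of a^p − 1 exceeds K; (ii) the primes q_p are pairwise distinct as p ranges over the disjoint union of the P_a; (iii) ∑_{p ∈ P_a} 1/p ≥ M for each a. -/
open Finset

private lemma bigT (c B : ℝ) (hc : 0 < c) :
    ∃ T : ℕ, ∀ p : ℕ, T ≤ p → B < c * p * Real.log p := by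
  have hl3 : (0:ℝ) < Real.log 3 := Real.log_pos (by norm_num)
  have hcl : 0 < c * Real.log 3 := mul_pos hc hl3
  refine ⟨⌈B / (c * Real.log 3)⌉₊ + 3, fun p hp => ?_⟩
  have h3 : (3:ℝ) ≤ p := by exact_mod_cast le_trans (by omega) hp
  have hlog : Real.log 3 ≤ Real.log p := Real.log_le_log (by norm_num) h3
  have hT : B / (c * Real.log 3) ≤ (⌈B / (c * Real.log 3)⌉₊ : ℝ) := Nat.le_ceil _
  have hpT : (⌈B / (c * Real.log 3)⌉₊ : ℝ) + 3 ≤ p := by exact_mod_cast hp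
  have h1 : B / (c * Real.log 3) < (p:ℝ) := by linarith
  have h2 : B < (p:ℝ) * (c * Real.log 3) := (div_lt_iff₀ hcl).mp h1
  have hp0 : (0:ℝ) ≤ p := by linarith
  have h4 : (p:ℝ) * (c * Real.log 3) ≤ (p:ℝ) * (c * Real.log p) :=
    mul_le_mul_of_nonneg_left (mul_le_mul_of_nonneg_left hlog hc.le) hp0
  have h5 : (p:ℝ) * (c * Real.log p) = c * p * Real.log p := by ring
  linarith

private lemma tail_sum (T : ℕ) (M : ℝ) :
    ∃ S : Finset ℕ, (∀ p ∈ S, p.Prime ∧ T < p) ∧ M ≤ ∑ p ∈ S, (1:ℝ)/p := by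
  set f : ℕ → ℝ := Set.indicator {p : ℕ | p.Prime ∧ T < p} (fun n => 1 / (n:ℝ)) with hf
  have hf0 : ∀ n, 0 ≤ f n := fun n => Set.indicator_nonneg (fun x _ => by positivity) n
  have hns : ¬ Summable f := by
    intro hs
    have hsmall : Summable (Set.indicator {p : ℕ | p.Prime ∧ p ≤ T} (fun n => (1:ℝ)/n)) := by
      apply summable_of_ne_finset_zero (s := Finset.range (T+1))
      intro n hn
      simp only [Finset.mem_range, not_lt] at hn
      apply Set.indicator_of_notMem
      simp only [Set.mem_setOf_eq, not_and, not_le]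
      omega
    have hbig : Summable (Set.indicator {p : ℕ | p.Prime} (fun n => (1:ℝ)/n)) := by
      have heq : Set.indicator {p : ℕ | p.Prime} (fun n => (1:ℝ)/n) =
          f + Set.indicator {p : ℕ | p.Prime ∧ p ≤ T} (fun n => (1:ℝ)/n) := by
        funext n
        rw [hf, Pi.add_apply]
        by_cases hn : n.Prime
        · by_cases hT : T < n
          · rw [Set.indicator_of_mem (show n ∈ {p : ℕ | p.Prime} from hn),
              Set.indicator_of_mem (show n ∈ {p : ℕ | p.Prime ∧ T < p} from ⟨hn, hT⟩),
              Set.indicator_of_notMem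
                (show n ∉ {p : ℕ | p.Prime ∧ p ≤ T} from fun h => absurd h.2 (not_le.mpr hT)),
              add_zero]
          · rw [Set.indicator_of_mem (show n ∈ {p : ℕ | p.Prime} from hn),
              Set.indicator_of_notMem
                (show n ∉ {p : ℕ | p.Prime ∧ T < p} from fun h => hT h.2),
              Set.indicator_of_mem
                (show n ∈ {p : ℕ | p.Prime ∧ p ≤ T} from ⟨hn, not_lt.mp hT⟩),
              zero_add]
        · rw [Set.indicator_of_notMem (show n ∉ {p : ℕ | p.Prime} from hn),
            Set.indicator_of_notMem
              (show n ∉ {p : ℕ | p.Prime ∧ T < p} from fun h => hn h.1),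
            Set.indicator_of_notMem
              (show n ∉ {p : ℕ | p.Prime ∧ p ≤ T} from fun h => hn h.1),
            add_zero]
      rw [heq]; exact hs.add hsmall
    exact not_summable_one_div_on_primes hbig
  have htend := (not_summable_iff_tendsto_nat_atTop_of_nonneg hf0).mp hns
  obtain ⟨n, hn⟩ := (htend.eventually_ge_atTop M).exists
  refine ⟨(Finset.range n).filter (fun p => p.Prime ∧ T < p), ?_, ?_⟩
  · intro p hp; exact (Finset.mem_filter.mp hp).2
  · have hsub2 : ∑ p ∈ (Finset.range n).filter (fun p => p.Prime ∧ T < p), f p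
        = ∑ i ∈ Finset.range n, f i :=
      Finset.sum_subset (Finset.filter_subset _ _)
        (fun p hp hnp => Set.indicator_of_notMem
          (show p ∉ {q : ℕ | q.Prime ∧ T < q} from
            fun hmem => hnp (Finset.mem_filter.mpr ⟨hp, hmem⟩)) _)
    have hcong : ∑ p ∈ (Finset.range n).filter (fun p => p.Prime ∧ T < p), f p
        = ∑ p ∈ (Finset.range n).filter (fun p => p.Prime ∧ T < p), (1:ℝ)/p :=
      Finset.sum_congr rfl (fun p hp => Set.indicator_of_mem
        (show p ∈ {q : ℕ | q.Prime ∧ T < q} from (Finset.mem_filter.mp hp).2) _)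
    linarith

private lemma qa_mem {a p : ℕ} (ha : 2 ≤ a) (hp : 2 ≤ p) :
    (a ^ p - 1).primeFactors.sup id ∈ (a ^ p - 1).primeFactors := by
  have h4 : 4 ≤ a ^ p := by
    calc (4:ℕ) = 2 ^ 2 := by norm_num
    _ ≤ 2 ^ p := Nat.pow_le_pow_right (by norm_num) hp
    _ ≤ a ^ p := Nat.pow_le_pow_left ha p
  have h1 : 1 < a ^ p - 1 := by omega
  have hne : (a ^ p - 1).primeFactors.Nonempty := Nat.nonempty_primeFactors.mpr h1
  have h := Finset.max'_mem _ hne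
  have e : (a ^ p - 1).primeFactors.max' hne = (a ^ p - 1).primeFactors.sup id :=
    Finset.sup'_eq_sup hne id
  rwa [e] at h

private lemma order_eq {a p Q : ℕ} (ha : 2 ≤ a) (hp : p.Prime) (hQ : Q.Prime) (haQ : a < Q)
    (hdvd : Q ∣ a ^ p - 1) : orderOf (a : ZMod Q) = p := by
  haveI := Fact.mk hQ
  have h1 : 1 ≤ a ^ p := Nat.one_le_pow _ _ (by omega)
  have hmod : a ^ p ≡ 1 [MOD Q] := ((Nat.modEq_iff_dvd' h1).mpr hdvd).symm
  have hz : (a : ZMod Q) ^ p = 1 := by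
    have h := (ZMod.natCast_eq_natCast_iff (a ^ p) 1 Q).mpr hmod
    push_cast at h
    exact h
  have hdvd' : orderOf (a : ZMod Q) ∣ p := orderOf_dvd_of_pow_eq_one hz
  have hne1 : orderOf (a : ZMod Q) ≠ 1 := by
    intro h1'
    have he : (a : ZMod Q) = 1 := orderOf_eq_one_iff.mp h1'
    have hm : a ≡ 1 [MOD Q] := by
      refine (ZMod.natCast_eq_natCast_iff a 1 Q).mp ?_
      push_cast
      exact he
    have hd : Q ∣ a - 1 := (Nat.modEq_iff_dvd' (by omega)).mp hm.symm
    have := Nat.le_of_dvd (by omega) hd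
    omega
  exact (hp.eq_one_or_self_of_dvd _ hdvd').resolve_left hne1

private lemma block (K : ℕ) (c : ℝ) (hc : 0 < c)
    (hst : ∀ p : ℕ, p.Prime → ∀ a : ℕ, 2 ≤ a → a ≤ K →
      c * p * Real.log p ≤ (((a ^ p - 1).primeFactors.sup id : ℕ) : ℝ))
    (B : ℝ) (a : ℕ) (ha : 2 ≤ a) (haK : a ≤ K) (M : ℝ) :
    ∃ S : Finset ℕ,
      (∀ p ∈ S, p.Prime ∧ K < (a ^ p - 1).primeFactors.sup id ∧
        B < (((a ^ p - 1).primeFactors.sup id : ℕ) : ℝ)) ∧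
      (∀ p ∈ S, ∀ p' ∈ S, p ≠ p' →
        (a ^ p - 1).primeFactors.sup id ≠ (a ^ p' - 1).primeFactors.sup id) ∧
      M ≤ ∑ p ∈ S, (1:ℝ)/p := by
  obtain ⟨T, hT⟩ := bigT c (max B K) hc
  obtain ⟨S, hS1, hS2⟩ := tail_sum T M
  have key : ∀ p ∈ S, p.Prime ∧ K < (a ^ p - 1).primeFactors.sup id ∧
      B < (((a ^ p - 1).primeFactors.sup id : ℕ) : ℝ) := by
    intro p hp
    obtain ⟨hpp, hpT⟩ := hS1 p hp
    have h1 : max B (K:ℝ) < c * p * Real.log p := hT p (le_of_lt hpT)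
    have h2 := hst p hpp a ha haK
    have hBq : max B (K:ℝ) < (((a ^ p - 1).primeFactors.sup id : ℕ) : ℝ) := lt_of_lt_of_le h1 h2
    refine ⟨hpp, ?_, lt_of_le_of_lt (le_max_left _ _) hBq⟩
    exact_mod_cast lt_of_le_of_lt (le_max_right _ _) hBq
  refine ⟨S, key, ?_, hS2⟩
  intro p hp p' hp' hne heq
  obtain ⟨hpp, hKq, _⟩ := key p hp
  obtain ⟨hpp', _, _⟩ := key p' hp'
  have hmem : (a ^ p - 1).primeFactors.sup id ∈ (a ^ p - 1).primeFactors :=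
    qa_mem ha hpp.two_le
  have hmem' : (a ^ p - 1).primeFactors.sup id ∈ (a ^ p' - 1).primeFactors := by
    rw [heq]; exact qa_mem ha hpp'.two_le
  obtain ⟨hQp, hQd, _⟩ := Nat.mem_primeFactors.mp hmem
  obtain ⟨_, hQd', _⟩ := Nat.mem_primeFactors.mp hmem'
  have haQ : a < (a ^ p - 1).primeFactors.sup id := lt_of_le_of_lt haK hKq
  have e1 := order_eq ha hpp hQp haQ hQd
  have e2 := order_eq ha hpp' hQp haQ hQd'
  exact hne (e1 ▸ e2)

theorem stmt_18 (K : ℕ) (hK : 2 ≤ K)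
    (stewart : ∃ c : ℝ, 0 < c ∧ ∀ p : ℕ, p.Prime → ∀ a : ℕ, 2 ≤ a → a ≤ K →
      c * p * Real.log p ≤ (((a ^ p - 1).primeFactors.sup id : ℕ) : ℝ))
    (M : ℝ) :
    ∃ P : ℕ → Finset ℕ,
      (∀ a ∈ Finset.Icc 2 K, ∀ p ∈ P a,
        p.Prime ∧ K < (a ^ p - 1).primeFactors.sup id) ∧
      (∀ a ∈ Finset.Icc 2 K, ∀ a' ∈ Finset.Icc 2 K, ∀ p ∈ P a, ∀ p' ∈ P a',
        (a, p) ≠ (a', p') →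
          (a ^ p - 1).primeFactors.sup id ≠ (a' ^ p' - 1).primeFactors.sup id) ∧
      (∀ a ∈ Finset.Icc 2 K, M ≤ ∑ p ∈ P a, (1 : ℝ) / p) := by
  obtain ⟨c, hc, hst⟩ := stewart
  suffices h : ∀ A : Finset ℕ, A ⊆ Finset.Icc 2 K → ∃ P : ℕ → Finset ℕ,
      (∀ a ∈ A, ∀ p ∈ P a, p.Prime ∧ K < (a ^ p - 1).primeFactors.sup id) ∧
      (∀ a ∈ A, ∀ a' ∈ A, ∀ p ∈ P a, ∀ p' ∈ P a', (a, p) ≠ (a', p') →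
          (a ^ p - 1).primeFactors.sup id ≠ (a' ^ p' - 1).primeFactors.sup id) ∧
      (∀ a ∈ A, M ≤ ∑ p ∈ P a, (1 : ℝ) / p) by
    exact h _ subset_rfl
  intro A
  induction A using Finset.induction_on with
  | empty => intro _; exact ⟨fun _ => ∅, by simp, by simp, by simp⟩
  | @insert a₀ A ha₀ ih =>
    intro hsub
    have hsubA : A ⊆ Finset.Icc 2 K := (Finset.subset_insert _ _).trans hsub
    obtain ⟨P, h1, h2, h3⟩ := ih hsubA
    have ha₀mem := hsub (Finset.mem_insert_self a₀ A)
    rw [Finset.mem_Icc] at ha₀mem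
    set B : ℝ := ∑ a ∈ A, ∑ p ∈ P a, (((a ^ p - 1).primeFactors.sup id : ℕ) : ℝ) with hB
    have hBle : ∀ a ∈ A, ∀ p ∈ P a, (((a ^ p - 1).primeFactors.sup id : ℕ) : ℝ) ≤ B := by
      intro a haA p hpP
      have t1 : (((a ^ p - 1).primeFactors.sup id : ℕ) : ℝ)
          ≤ ∑ q ∈ P a, (((a ^ q - 1).primeFactors.sup id : ℕ) : ℝ) :=
        Finset.single_le_sum (f := fun q => (((a ^ q - 1).primeFactors.sup id : ℕ) : ℝ))
          (fun i _ => by positivity) hpP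
      have t2 : ∑ q ∈ P a, (((a ^ q - 1).primeFactors.sup id : ℕ) : ℝ) ≤ B :=
        Finset.single_le_sum
          (f := fun b => ∑ q ∈ P b, (((b ^ q - 1).primeFactors.sup id : ℕ) : ℝ))
          (fun i _ => Finset.sum_nonneg fun _ _ => by positivity) haA
      linarith
    obtain ⟨S, hS1, hS2, hS3⟩ := block K c hc hst B a₀ ha₀mem.1 ha₀mem.2 M
    refine ⟨Function.update P a₀ S, ?_, ?_, ?_⟩
    · intro a haA p hp
      rcases Finset.mem_insert.mp haA with rfl | haA'
      · rw [Function.update_self] at hp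
        exact ⟨(hS1 p hp).1, (hS1 p hp).2.1⟩
      · have hne : a ≠ a₀ := fun h => ha₀ (h ▸ haA')
        rw [Function.update_of_ne hne] at hp
        exact h1 a haA' p hp
    · intro a haA a' haA' p hp p' hp' hpair
      rcases Finset.mem_insert.mp haA with rfl | haA2
      · rw [Function.update_self] at hp
        rcases Finset.mem_insert.mp haA' with rfl | haA2'
        · rw [Function.update_self] at hp'
          exact hS2 p hp p' hp' (fun h => hpair (by rw [h]))
        · have hne' : a' ≠ a := fun h => ha₀ (h ▸ haA2')
          rw [Function.update_of_ne hne'] at hp'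
          have hBlt := (hS1 p hp).2.2
          have hle := hBle a' haA2' p' hp'
          intro heqq
          have := congrArg (fun n : ℕ => (n : ℝ)) heqq
          linarith
      · have hne : a ≠ a₀ := fun h => ha₀ (h ▸ haA2)
        rw [Function.update_of_ne hne] at hp
        rcases Finset.mem_insert.mp haA' with rfl | haA2'
        · rw [Function.update_self] at hp'
          have hBlt := (hS1 p' hp').2.2
          have hle := hBle a haA2 p hp
          intro heqq
          have := congrArg (fun n : ℕ => (n : ℝ)) heqq
          linarith
        · have hne' : a' ≠ a₀ := fun h => ha₀ (h ▸ haA2')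
          rw [Function.update_of_ne hne'] at hp'
          exact h2 a haA2 a' haA2' p hp p' hp' hpair
    · intro a haA
      rcases Finset.mem_insert.mp haA with rfl | haA'
      · rw [Function.update_self]; exact hS3
      · have hne : a ≠ a₀ := fun h => ha₀ (h ▸ haA')
        rw [Function.update_of_ne hne]
        exact h3 a haA'
end
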